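/- arXiv:1303.3685 — 3 statements merged into one kernel-verified Lean document; each statement's English description precedes it below -/
import Mathlib

section
/- Let G(z) = (z + a)^{1−α} (z − b)^{α} with a, b > 0, α ∈ (0,1), and αa = (1−α)b, so that G is a conformal map from the upper half-plane ℍ onto ℍ minus a straight slit starting at 0, with 0 mapped to the tip of the slit. Then the function y ↦ Im G(iy) is increasing on (0,∞). In particular, for every y > 0, Im G(iy) is at least the imaginary part of the tip of the slit, i.e. Im G(iy) ≥ Im G(0). -/
open Complex Set Filter Topology

/-- The slit map `G(z) = (z+a)^{1−α} (z−b)^{α}` (principal branches), `a, b > 0`,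
`α ∈ (0,1)`, `αa = (1−α)b`. It maps `ℍ` conformally onto `ℍ` minus a straight slit
starting at `0`, with `0` mapped to the tip of the slit. The function `y ↦ Im G(iy)`
is increasing on `(0,∞)`; in particular `Im G(iy) ≥ Im G(0)` for every `y > 0`. -/
theorem slit_map_imaginary_increasing (a b α : ℝ) (ha : 0 < a) (hb : 0 < b)
    (hα : α ∈ Set.Ioo (0:ℝ) 1) (hab : α * a = (1 - α) * b) :
    let G : ℂ → ℂ := fun z => (z + (a : ℂ)) ^ ((1 - α : ℝ) : ℂ) * (z - (b : ℂ)) ^ ((α : ℝ) : ℂ)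
    StrictMonoOn (fun y : ℝ => (G (Complex.I * (y : ℂ))).im) (Set.Ioi 0) ∧
      ∀ y : ℝ, 0 < y → (G 0).im ≤ (G (Complex.I * (y : ℂ))).im := by
  intro G
  obtain ⟨hα0, hα1⟩ := hα
  have h1α : (0:ℝ) < 1 - α := by linarith
  have pi_pos := Real.pi_pos
  set c1 : ℂ := ((1 - α : ℝ) : ℂ) with hc1
  set c2 : ℂ := ((α : ℝ) : ℂ) with hc2
  -- the key derivative computation
  have key : ∀ y : ℝ, 0 < y → ∃ d : ℝ, 0 < d ∧
      HasDerivAt (fun t : ℝ => (G (Complex.I * (t : ℂ))).im) d y := by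
    intro y hy
    set w1 : ℂ := Complex.I * (y:ℂ) + a with hw1
    set w2 : ℂ := Complex.I * (y:ℂ) - b with hw2
    have hw1im : w1.im = y := by simp [hw1]
    have hw2im : w2.im = y := by simp [hw2]
    have hw1re : w1.re = a := by simp [hw1]
    have hw2re : w2.re = -b := by simp [hw2]
    have hw1ne : w1 ≠ 0 := fun h => hy.ne' (by rw [← hw1im, h]; simp)
    have hw2ne : w2 ≠ 0 := fun h => hy.ne' (by rw [← hw2im, h]; simp)
    have hw1s : w1 ∈ Complex.slitPlane :=
      Complex.mem_slitPlane_iff.2 (Or.inr (by rw [hw1im]; exact hy.ne'))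
    have hw2s : w2 ∈ Complex.slitPlane :=
      Complex.mem_slitPlane_iff.2 (Or.inr (by rw [hw2im]; exact hy.ne'))
    have h1 : HasDerivAt (fun z : ℂ => Complex.I * z + (a:ℂ)) Complex.I (y:ℂ) := by
      simpa using ((hasDerivAt_id ((y:ℝ):ℂ)).const_mul Complex.I).add_const (a:ℂ)
    have h2 : HasDerivAt (fun z : ℂ => Complex.I * z - (b:ℂ)) Complex.I (y:ℂ) := by
      simpa using ((hasDerivAt_id ((y:ℝ):ℂ)).const_mul Complex.I).sub_const (b:ℂ)
    have hA : HasDerivAt (fun z : ℂ => (Complex.I * z + (a:ℂ)) ^ c1)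
        (c1 * w1 ^ (c1 - 1) * Complex.I) (y:ℂ) := h1.cpow_const hw1s
    have hB : HasDerivAt (fun z : ℂ => (Complex.I * z - (b:ℂ)) ^ c2)
        (c2 * w2 ^ (c2 - 1) * Complex.I) (y:ℂ) := h2.cpow_const hw2s
    have hD : HasDerivAt (fun z : ℂ => (Complex.I * z + (a:ℂ)) ^ c1 * (Complex.I * z - (b:ℂ)) ^ c2)
        (c1 * w1 ^ (c1 - 1) * Complex.I * w2 ^ c2 + w1 ^ c1 * (c2 * w2 ^ (c2 - 1) * Complex.I))
        (y:ℂ) := hA.mul hB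
    set P : ℂ := w1 ^ (c1 - 1) * w2 ^ (c2 - 1) with hP
    set D : ℂ := c1 * w1 ^ (c1 - 1) * Complex.I * w2 ^ c2
        + w1 ^ c1 * (c2 * w2 ^ (c2 - 1) * Complex.I) with hDdef
    have hcomp : HasDerivAt (fun t : ℝ => G (Complex.I * (t:ℂ))) D y := hD.comp_ofReal
    have him : HasDerivAt (fun t : ℝ => (G (Complex.I * (t:ℂ))).im) D.im y := by
      exact Complex.imCLM.hasFDerivAt.comp_hasDerivAt y hcomp
    -- simplify D
    have hsplit1 : w1 ^ c1 = w1 ^ (c1 - 1) * w1 := by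
      conv_lhs => rw [show c1 = (c1 - 1) + 1 by ring]
      rw [Complex.cpow_add _ _ hw1ne, Complex.cpow_one]
    have hsplit2 : w2 ^ c2 = w2 ^ (c2 - 1) * w2 := by
      conv_lhs => rw [show c2 = (c2 - 1) + 1 by ring]
      rw [Complex.cpow_add _ _ hw2ne, Complex.cpow_one]
    have hcc : c1 * w2 + c2 * w1 = Complex.I * (y:ℂ) := by
      have hab' : (α:ℂ) * (a:ℂ) = (1 - (α:ℂ)) * (b:ℂ) := by exact_mod_cast hab
      rw [hw1, hw2, hc1, hc2]
      push_cast
      linear_combination hab'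
    have hDval : D = -(y:ℂ) * P := by
      rw [hDdef, hsplit1, hsplit2, hP]
      linear_combination (Complex.I * w1 ^ (c1 - 1) * w2 ^ (c2 - 1)) * hcc +
        ((y:ℂ) * w1 ^ (c1 - 1) * w2 ^ (c2 - 1)) * Complex.I_mul_I
    -- compute the imaginary part of P via exp/log
    set E : ℂ := Complex.log w1 * (c1 - 1) + Complex.log w2 * (c2 - 1) with hE
    have hPexp : P = Complex.exp E := by
      rw [hP, hE, Complex.cpow_def_of_ne_zero hw1ne, Complex.cpow_def_of_ne_zero hw2ne,
        ← Complex.exp_add]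
    have hEim : E.im = -(α * Complex.arg w1 + (1 - α) * Complex.arg w2) := by
      rw [hE, hc1, hc2]
      simp [Complex.add_im, Complex.mul_im, Complex.log_im, Complex.sub_re, Complex.sub_im]
      ring
    have harg1pos : 0 < Complex.arg w1 := by
      rcases lt_or_eq_of_le (Complex.arg_nonneg_iff.2 (by rw [hw1im]; exact hy.le)) with h | h
      · exact h
      · exact absurd ((Complex.arg_eq_zero_iff.1 h.symm).2) (by rw [hw1im]; exact hy.ne')
    have harg2pos : 0 < Complex.arg w2 := by
      rcases lt_or_eq_of_le (Complex.arg_nonneg_iff.2 (by rw [hw2im]; exact hy.le)) with h | h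
      · exact h
      · exact absurd ((Complex.arg_eq_zero_iff.1 h.symm).2) (by rw [hw2im]; exact hy.ne')
    have harg1lt : Complex.arg w1 < Real.pi / 2 :=
      Complex.arg_lt_pi_div_two_iff.2 (Or.inl (by rw [hw1re]; exact ha))
    have harg2lt : Complex.arg w2 < Real.pi :=
      Complex.arg_lt_pi_iff.2 (Or.inr (by rw [hw2im]; exact hy.ne'))
    have hEneg : E.im < 0 := by
      rw [hEim]
      nlinarith [mul_pos hα0 harg1pos, mul_pos h1α harg2pos]
    have hEgt : -Real.pi < E.im := by
      rw [hEim]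
      nlinarith [mul_lt_mul_of_pos_left harg1lt hα0, mul_lt_mul_of_pos_left harg2lt h1α,
        mul_pos hα0 pi_pos]
    have hPim : P.im < 0 := by
      rw [hPexp, Complex.exp_im]
      exact mul_neg_of_pos_of_neg (Real.exp_pos _)
        (Real.sin_neg_of_neg_of_neg_pi_lt hEneg hEgt)
    have hDim : D.im = (-y) * P.im := by
      rw [hDval]
      simp [Complex.mul_im]
    refine ⟨D.im, ?_, him⟩
    rw [hDim]
    exact mul_pos_of_neg_of_neg (neg_neg_of_pos hy) hPim
  -- strict monotonicity
  have hmono : StrictMonoOn (fun y : ℝ => (G (Complex.I * (y : ℂ))).im) (Set.Ioi 0) := by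
    apply strictMonoOn_of_deriv_pos (convex_Ioi 0)
    · intro y hy
      obtain ⟨d, _, hder⟩ := key y hy
      exact hder.continuousAt.continuousWithinAt
    · intro y hy
      rw [interior_Ioi] at hy
      obtain ⟨d, hd, hder⟩ := key y hy
      rw [hder.deriv]; exact hd
  refine ⟨hmono, ?_⟩
  -- continuity at 0 from the right
  have hbne : (-(b:ℂ)) ≠ 0 := by
    simpa using (ne_of_gt hb)
  have htend : Tendsto (fun t : ℝ => (G (Complex.I * (t : ℂ))).im) (𝓝[>] (0:ℝ))
      (𝓝 (G 0).im) := by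
    have hG0 : G 0 = (a:ℂ) ^ c1 * (-(b:ℂ)) ^ c2 := by
      show ((0:ℂ) + a) ^ c1 * ((0:ℂ) - b) ^ c2 = _
      rw [zero_add, zero_sub]
    have hcontinner : Continuous fun t : ℝ => Complex.I * (t:ℂ) + a :=
      (continuous_const.mul Complex.continuous_ofReal).add continuous_const
    have hcontinner2 : Continuous fun t : ℝ => Complex.I * (t:ℂ) - b :=
      (continuous_const.mul Complex.continuous_ofReal).sub continuous_const
    have h1 : Tendsto (fun t : ℝ => (Complex.I * (t:ℂ) + a) ^ c1) (𝓝[>] (0:ℝ))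
        (𝓝 ((a:ℂ) ^ c1)) := by
      have hc : ContinuousAt (fun z : ℂ => z ^ c1) (a:ℂ) :=
        continuousAt_cpow_const (Complex.mem_slitPlane_iff.2 (Or.inl (by simpa using ha)))
      have : Tendsto (fun t : ℝ => Complex.I * (t:ℂ) + a) (𝓝[>] (0:ℝ)) (𝓝 ((a:ℂ))) := by
        have := (hcontinner.tendsto 0).mono_left (nhdsWithin_le_nhds (s := Set.Ioi (0:ℝ)))
        simpa using this
      exact hc.tendsto.comp this
    have h2 : Tendsto (fun t : ℝ => (Complex.I * (t:ℂ) - b) ^ c2) (𝓝[>] (0:ℝ))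
        (𝓝 ((-(b:ℂ)) ^ c2)) := by
      have hlog : Tendsto Complex.log (𝓝[{z : ℂ | 0 ≤ z.im}] (-(b:ℂ)))
          (𝓝 (Complex.log (-(b:ℂ)))) :=
        (Complex.continuousWithinAt_log_of_re_neg_of_im_zero
          (by simpa using hb) (by simp)).tendsto
      have hmap : Tendsto (fun t : ℝ => Complex.I * (t:ℂ) - b) (𝓝[>] (0:ℝ))
          (𝓝[{z : ℂ | 0 ≤ z.im}] (-(b:ℂ))) := by
        rw [tendsto_nhdsWithin_iff]
        constructor
        · have := (hcontinner2.tendsto 0).mono_left (nhdsWithin_le_nhds (s := Set.Ioi (0:ℝ)))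
          simpa using this
        · filter_upwards [self_mem_nhdsWithin] with t ht
          simp only [Set.mem_setOf_eq, Complex.sub_im, Complex.mul_im, Complex.I_re,
            Complex.I_im, Complex.ofReal_re, Complex.ofReal_im]
          simpa using (le_of_lt ht)
      have hexp : Tendsto (fun t : ℝ => Complex.exp (Complex.log (Complex.I * (t:ℂ) - b) * c2))
          (𝓝[>] (0:ℝ)) (𝓝 (Complex.exp (Complex.log (-(b:ℂ)) * c2))) :=
        ((hlog.comp hmap).mul_const c2).cexp
      rw [Complex.cpow_def_of_ne_zero hbne c2]
      refine hexp.congr' ?_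
      filter_upwards [self_mem_nhdsWithin] with t ht
      have hne : Complex.I * (t:ℂ) - b ≠ 0 := by
        intro h
        have : (Complex.I * (t:ℂ) - (b:ℂ)).im = t := by simp
        rw [h] at this
        simp at this
        exact (lt_irrefl (0:ℝ)) (this ▸ ht)
      rw [Complex.cpow_def_of_ne_zero hne]
    have hGmul : Tendsto (fun t : ℝ => G (Complex.I * (t:ℂ))) (𝓝[>] (0:ℝ)) (𝓝 (G 0)) := by
      rw [hG0]; exact h1.mul h2
    exact (Complex.continuous_im.tendsto _).comp hGmul
  intro y hy
  have hev : ∀ᶠ t : ℝ in 𝓝[>] (0:ℝ), (G (Complex.I * (t : ℂ))).im ≤ (G (Complex.I * (y : ℂ))).im := by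
    filter_upwards [Ioo_mem_nhdsGT_of_mem (Set.mem_Ico.2 ⟨le_refl (0:ℝ), hy⟩)] with t ht
    exact (hmono (mem_Ioi.2 ht.1) (mem_Ioi.2 hy) ht.2).le
  exact le_of_tendsto htend hev
end

section
/- Let 0 < T < ∞ and let f_t^{(1)}, f_t^{(2)} satisfy the upward Loewner equation ∂_t f_t(z) = −2/(f_t(z) − W_t^{(i)}), f_0(z) = z, with continuous driving terms W^{(1)}, W^{(2)} respectively, and set ε = sup_{s∈[0,T]} |W_s^{(1)} − W_s^{(2)}|. Then for u = x + iy ∈ ℍ, |f_T^{(1)}(u) − f_T^{(2)}(u)| ≤ ε · exp{ (1/2)[ log( I_{T,y} |(f_T^{(1)})′(u)| / y ) · log( I_{T,y} |(f_T^{(2)})′(u)| / y ) ]^{1/2} + log log( I_{T,y} / y ) }, where I_{T,y} = √(4T + y²). -/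
open Filter Set Topology MeasureTheory intervalIntegral

set_option linter.unusedSectionVars false
set_option maxHeartbeats 1000000


lemma hasDerivAt_im' {F : ℝ → ℂ} {d : ℂ} {t : ℝ} (h : HasDerivAt F d t) :
    HasDerivAt (fun s => (F s).im) d.im t :=
  Complex.imCLM.hasFDerivAt.comp_hasDerivAt t h

lemma im_neg_two_div (q : ℂ) : ((-2 : ℂ) / q).im = 2 * q.im / Complex.normSq q := by
  simp [Complex.div_im]; ring

lemma loewner_im_mono (T : ℝ) (W : ℝ → ℝ) (F : ℝ → ℂ)
    (hF : ∀ t ∈ Icc (0:ℝ) T, HasDerivAt F (-2 / (F t - W t)) t)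
    {a b : ℝ} (hab : Icc a b ⊆ Icc (0:ℝ) T)
    (hpos : ∀ s ∈ Icc a b, 0 < (F s).im) :
    MonotoneOn (fun s => (F s).im) (Icc a b) := by
  apply monotoneOn_of_deriv_nonneg (convex_Icc a b)
  · intro s hs
    exact (hasDerivAt_im' (hF s (hab hs))).continuousAt.continuousWithinAt
  · intro s hs
    rw [interior_Icc] at hs
    exact (hasDerivAt_im' (hF s (hab (Ioo_subset_Icc_self hs)))).differentiableAt.differentiableWithinAt
  · intro s hs
    rw [interior_Icc] at hs
    have hs' := Ioo_subset_Icc_self hs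
    rw [(hasDerivAt_im' (hF s (hab hs'))).deriv]
    rw [im_neg_two_div]
    have himq : (F s - W s).im = (F s).im := by simp
    rw [himq]
    exact div_nonneg (by have := (hpos s hs').le; positivity) (Complex.normSq_nonneg _)


lemma loewner_im_lower (T : ℝ) (W : ℝ → ℝ) (F : ℝ → ℂ)
    (hF : ∀ t ∈ Icc (0:ℝ) T, HasDerivAt F (-2 / (F t - W t)) t)
    (h0 : 0 < (F 0).im) :
    ∀ t ∈ Icc (0:ℝ) T, (F 0).im ≤ (F t).im := by
  set c := (F 0).im with hc
  set A : Set ℝ := {t | t ∈ Icc (0:ℝ) T ∧ ∀ s ∈ Icc (0:ℝ) t, c ≤ (F s).im} with hA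
  intro t ht
  have h0A : (0:ℝ) ∈ A := ⟨⟨le_refl _, ht.1.trans ht.2⟩, fun s hs => by
    have : s = 0 := le_antisymm hs.2 hs.1
    simp [this, hc]⟩
  have hbdd : BddAbove A := ⟨T, fun x hx => hx.1.2⟩
  set τ := sSup A with hτ
  have hτmem : τ ∈ Icc (0:ℝ) T := ⟨le_csSup hbdd h0A, csSup_le ⟨0, h0A⟩ (fun x hx => hx.1.2)⟩
  have hpre : ∀ s, 0 ≤ s → s < τ → c ≤ (F s).im := by
    intro s hs0 hsτ
    obtain ⟨a, haA, hsa⟩ := exists_lt_of_lt_csSup ⟨0, h0A⟩ hsτ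
    exact haA.2 s ⟨hs0, hsa.le⟩
  have hτval : c ≤ (F τ).im := by
    rcases eq_or_lt_of_le hτmem.1 with h | h
    · rw [← h]
    · have hcont : Tendsto (fun s => (F s).im) (nhdsWithin τ (Iio τ)) (nhds ((F τ).im)) :=
        ((hasDerivAt_im' (hF τ hτmem)).continuousAt.tendsto).mono_left nhdsWithin_le_nhds
      have hne : (nhdsWithin τ (Iio τ)).NeBot := nhdsLT_neBot τ
      refine ge_of_tendsto hcont ?_
      have hIoo : Ioo (0:ℝ) τ ∈ nhdsWithin τ (Iio τ) :=
        Ioo_mem_nhdsLT_of_mem ⟨h, le_refl _⟩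
      filter_upwards [hIoo] with s hs
      exact hpre s hs.1.le hs.2
  have hτA : τ ∈ A := by
    refine ⟨hτmem, fun s hs => ?_⟩
    rcases lt_or_eq_of_le hs.2 with h | h
    · exact hpre s hs.1 h
    · rw [h]; exact hτval
  have hτT : τ = T := by
    by_contra hne
    have hlt : τ < T := lt_of_le_of_ne hτmem.2 hne
    obtain ⟨δ, hδ, hδprop⟩ := Metric.continuousAt_iff.mp
      (hasDerivAt_im' (hF τ hτmem)).continuousAt c h0
    set b := min (τ + δ/2) T with hb
    have hτb : τ < b := lt_min (by linarith) hlt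
    have hsub : Icc τ b ⊆ Icc (0:ℝ) T :=
      fun x hx => ⟨hτmem.1.trans hx.1, hx.2.trans (min_le_right _ _)⟩
    have hpos : ∀ s ∈ Icc τ b, 0 < (F s).im := by
      intro s hs
      have : dist s τ < δ := by
        rw [Real.dist_eq, abs_of_nonneg (by linarith [hs.1])]
        have : s ≤ τ + δ/2 := hs.2.trans (min_le_left _ _)
        linarith
      have := hδprop this
      rw [Real.dist_eq, abs_lt] at this
      linarith [hτval]
    have hmono := loewner_im_mono T W F hF hsub hpos
    have hbA : b ∈ A := by
      refine ⟨⟨hτmem.1.trans hτb.le, min_le_right _ _⟩, fun s hs => ?_⟩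
      rcases le_or_gt s τ with h | h
      · exact hτA.2 s ⟨hs.1, h⟩
      · calc c ≤ (F τ).im := hτval
          _ ≤ (F s).im := hmono ⟨le_refl _, hτb.le⟩ ⟨h.le, hs.2⟩ h.le
    exact absurd (le_csSup hbdd hbA) (not_le.mpr hτb)
  exact hτA.2 t (by rw [hτT] at *; exact ht)


noncomputable def primit (T : ℝ) (φ : ℝ → ℂ) : ℝ → ℂ :=
  fun t => ∫ s in (0:ℝ)..t, φ (max 0 (min s T))

lemma clamp_mem {T : ℝ} (hT : 0 ≤ T) (s : ℝ) : max 0 (min s T) ∈ Icc (0:ℝ) T :=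
  ⟨le_max_left _ _, max_le hT (min_le_right s T)⟩

lemma clamp_eq {T t : ℝ} (ht : t ∈ Icc (0:ℝ) T) : max 0 (min t T) = t := by
  rw [min_eq_left ht.2, max_eq_right ht.1]

section primit
variable {T : ℝ} {φ : ℝ → ℂ}

lemma clamp_cont (hT : 0 ≤ T) (hφ : ContinuousOn φ (Icc 0 T)) :
    Continuous (fun s => φ (max 0 (min s T))) :=
  hφ.comp_continuous (continuous_const.max (continuous_id.min continuous_const)) (clamp_mem hT)

lemma primit_hasDerivAt' (hT : 0 ≤ T) (hφ : ContinuousOn φ (Icc 0 T)) (t : ℝ) :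
    HasDerivAt (primit T φ) (φ (max 0 (min t T))) t := by
  have hψ := clamp_cont hT hφ
  exact integral_hasDerivAt_right (hψ.intervalIntegrable 0 t)
    (hψ.stronglyMeasurableAtFilter volume (nhds t)) hψ.continuousAt

lemma primit_hasDerivAt (hT : 0 ≤ T) (hφ : ContinuousOn φ (Icc 0 T)) {t : ℝ}
    (ht : t ∈ Icc (0:ℝ) T) : HasDerivAt (primit T φ) (φ t) t := by
  have h := primit_hasDerivAt' hT hφ t
  rwa [clamp_eq ht] at h

lemma primit_continuous (hT : 0 ≤ T) (hφ : ContinuousOn φ (Icc 0 T)) :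
    Continuous (primit T φ) :=
  continuous_iff_continuousAt.mpr fun t => (primit_hasDerivAt' hT hφ t).continuousAt

lemma primit_zero : primit T φ 0 = 0 := integral_same

lemma primit_eq (hT : 0 ≤ T) (hφ : ContinuousOn φ (Icc 0 T)) {t : ℝ} (ht : t ∈ Icc (0:ℝ) T) :
    primit T φ t = ∫ s in (0:ℝ)..t, φ s := by
  apply integral_congr
  intro s hs
  rw [uIcc_of_le ht.1] at hs
  exact congrArg φ (clamp_eq ⟨hs.1, hs.2.trans ht.2⟩)

lemma primit_sub (hT : 0 ≤ T) (hφ : ContinuousOn φ (Icc 0 T)) {t : ℝ} (ht : t ∈ Icc (0:ℝ) T) :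
    primit T φ T - primit T φ t = ∫ s in t..T, φ s := by
  have hψ := clamp_cont hT hφ
  have hsplit : primit T φ t + ∫ s in t..T, φ (max 0 (min s T)) = primit T φ T :=
    integral_add_adjacent_intervals (hψ.intervalIntegrable 0 t) (hψ.intervalIntegrable t T)
  have hcongr : (∫ s in t..T, φ (max 0 (min s T))) = ∫ s in t..T, φ s := by
    apply integral_congr
    intro s hs
    rw [uIcc_of_le ht.2] at hs
    exact congrArg φ (clamp_eq ⟨ht.1.trans hs.1, hs.2⟩)
  rw [← hsplit, hcongr]; ring

end primit


section pair

variable (T : ℝ) (V W : ℝ → ℝ) (F G : ℝ → ℂ)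

-- continuity of trajectories
lemma traj_contOn (hF : ∀ t ∈ Icc (0:ℝ) T, HasDerivAt F (-2 / (F t - V t)) t) :
    ContinuousOn F (Icc 0 T) :=
  fun t ht => (hF t ht).continuousAt.continuousWithinAt

variable (hT : 0 ≤ T) (hV : Continuous V) (hW : Continuous W)
  (hF : ∀ t ∈ Icc (0:ℝ) T, HasDerivAt F (-2 / (F t - V t)) t)
  (hG : ∀ t ∈ Icc (0:ℝ) T, HasDerivAt G (-2 / (G t - W t)) t)
  (hFim : ∀ t ∈ Icc (0:ℝ) T, 0 < (F t).im)
  (hGim : ∀ t ∈ Icc (0:ℝ) T, 0 < (G t).im)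

include hT hV hW hF hG hFim hGim

lemma pr_ne (t : ℝ) (ht : t ∈ Icc (0:ℝ) T) :
    (F t - V t) * (G t - W t) ≠ 0 := by
  apply mul_ne_zero <;> intro h
  · have : (F t - (V t : ℂ)).im = 0 := by rw [h]; simp
    simp only [Complex.sub_im, Complex.ofReal_im, sub_zero] at this
    exact absurd this (ne_of_gt (hFim t ht))
  · have : (G t - (W t : ℂ)).im = 0 := by rw [h]; simp
    simp only [Complex.sub_im, Complex.ofReal_im, sub_zero] at this
    exact absurd this (ne_of_gt (hGim t ht))

lemma phi_contOn :
    ContinuousOn (fun t => (2:ℂ) / ((F t - V t) * (G t - W t))) (Icc 0 T) := by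
  apply ContinuousOn.div continuousOn_const
  · exact ((traj_contOn T V F hF).sub ((Complex.continuous_ofReal.comp hV).continuousOn)).mul
      ((traj_contOn T W G hG).sub ((Complex.continuous_ofReal.comp hW).continuousOn))
  · exact pr_ne T V W F G hT hV hW hF hG hFim hGim

-- key identity
lemma pair_identity :
    (F T - G T) * Complex.exp (-(primit T (fun t => (2:ℂ) / ((F t - V t) * (G t - W t))) T)) -
      (F 0 - G 0) =
    ∫ t in (0:ℝ)..T,
      Complex.exp (-(primit T (fun t => (2:ℂ) / ((F t - V t) * (G t - W t))) t)) *
        (-2 * ((V t : ℂ) - W t) / ((F t - V t) * (G t - W t))) := by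
  set φ : ℝ → ℂ := fun t => (2:ℂ) / ((F t - V t) * (G t - W t)) with hφdef
  have hφc : ContinuousOn φ (Icc 0 T) := phi_contOn T V W F G hT hV hW hF hG hFim hGim
  set Φ := primit T φ with hΦdef
  have hK : ∀ t ∈ Icc (0:ℝ) T,
      HasDerivAt (fun s => (F s - G s) * Complex.exp (-(Φ s)))
        (Complex.exp (-(Φ t)) * (-2 * ((V t : ℂ) - W t) / ((F t - V t) * (G t - W t)))) t := by
    intro t ht
    have hv : HasDerivAt (fun s => F s - G s)
        ((-2 / (F t - V t)) - (-2 / (G t - W t))) t := (hF t ht).sub (hG t ht)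
    have hexp : HasDerivAt (fun s => Complex.exp (-(Φ s)))
        (Complex.exp (-(Φ t)) * (-(φ t))) t := ((primit_hasDerivAt hT hφc ht).neg).cexp
    have hmul := hv.mul hexp
    refine hmul.congr_deriv ?_
    have h1 : F t - V t ≠ 0 := fun h => by
      have := pr_ne T V W F G hT hV hW hF hG hFim hGim t ht; rw [h] at this; simp at this
    have h2 : G t - W t ≠ 0 := fun h => by
      have := pr_ne T V W F G hT hV hW hF hG hFim hGim t ht; rw [h] at this; simp at this
    rw [hφdef]
    field_simp
    ring
  have hint : IntervalIntegrable
      (fun t => Complex.exp (-(Φ t)) *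
        (-2 * ((V t : ℂ) - W t) / ((F t - V t) * (G t - W t)))) volume 0 T := by
    apply ContinuousOn.intervalIntegrable
    rw [uIcc_of_le hT]
    apply ContinuousOn.mul
    · exact ((primit_continuous hT hφc).neg.cexp).continuousOn
    · apply ContinuousOn.div
      · apply ContinuousOn.mul continuousOn_const
        exact ((Complex.continuous_ofReal.comp hV).continuousOn.sub
          (Complex.continuous_ofReal.comp hW).continuousOn)
      · exact ((traj_contOn T V F hF).sub ((Complex.continuous_ofReal.comp hV).continuousOn)).mul
          ((traj_contOn T W G hG).sub ((Complex.continuous_ofReal.comp hW).continuousOn))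
      · exact pr_ne T V W F G hT hV hW hF hG hFim hGim
  have := integral_eq_sub_of_hasDerivAt (f := fun s => (F s - G s) * Complex.exp (-(Φ s)))
    (fun t ht => hK t (by rwa [uIcc_of_le hT] at ht)) hint
  rw [this]
  have h0 : Φ 0 = 0 := primit_zero
  simp only [h0, neg_zero, Complex.exp_zero, mul_one]


lemma pair_same_driver (hVW : V = W) :
    F T - G T = (F 0 - G 0) *
      Complex.exp (∫ t in (0:ℝ)..T, (2:ℂ) / ((F t - V t) * (G t - W t))) := by
  have hid := pair_identity T V W F G hT hV hW hF hG hFim hGim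
  have hz : (∫ t in (0:ℝ)..T,
      Complex.exp (-(primit T (fun t => (2:ℂ) / ((F t - V t) * (G t - W t))) t)) *
        (-2 * ((V t : ℂ) - W t) / ((F t - V t) * (G t - W t)))) = 0 := by
    subst hVW
    simp
  rw [hz, sub_eq_zero] at hid
  have hφc : ContinuousOn (fun t => (2:ℂ) / ((F t - V t) * (G t - W t))) (Icc 0 T) :=
    phi_contOn T V W F G hT hV hW hF hG hFim hGim
  rw [← primit_eq hT hφc (right_mem_Icc.mpr hT), ← hid, Complex.exp_neg]
  field_simp

lemma pair_norm_bound (h00 : F 0 = G 0) (S : ℝ)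
    (hS : ∀ t ∈ Icc (0:ℝ) T,
      (∫ s in t..T, ((2:ℂ) / ((F s - V s) * (G s - W s))).re) ≤ S) :
    ‖F T - G T‖ ≤ Real.exp S *
      ∫ t in (0:ℝ)..T, ‖(2:ℂ) * ((V t : ℂ) - W t) / ((F t - V t) * (G t - W t))‖ := by
  set φ : ℝ → ℂ := fun t => (2:ℂ) / ((F t - V t) * (G t - W t)) with hφdef
  have hφc : ContinuousOn φ (Icc 0 T) := phi_contOn T V W F G hT hV hW hF hG hFim hGim
  set Φ := primit T φ with hΦdef
  have hid := pair_identity T V W F G hT hV hW hF hG hFim hGim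
  rw [h00, sub_self] at hid
  have heq : F T - G T = (∫ t in (0:ℝ)..T,
      Complex.exp (-(Φ t)) * (-2 * ((V t : ℂ) - W t) / ((F t - V t) * (G t - W t)))) *
      Complex.exp (Φ T) := by
    rw [← sub_zero ((F T - G T) * Complex.exp (-(Φ T)))] at hid
    rw [← hid, Complex.exp_neg]
    field_simp
    simp
  have hΦcont : Continuous Φ := primit_continuous hT hφc
  have hprcont : ContinuousOn (fun t => (-2 : ℂ) * ((V t : ℂ) - W t) / ((F t - V t) * (G t - W t)))
      (Icc 0 T) := by
    apply ContinuousOn.div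
    · apply ContinuousOn.mul continuousOn_const
      exact ((Complex.continuous_ofReal.comp hV).continuousOn.sub
        (Complex.continuous_ofReal.comp hW).continuousOn)
    · exact ((traj_contOn T V F hF).sub ((Complex.continuous_ofReal.comp hV).continuousOn)).mul
        ((traj_contOn T W G hG).sub ((Complex.continuous_ofReal.comp hW).continuousOn))
    · exact pr_ne T V W F G hT hV hW hF hG hFim hGim
  calc ‖F T - G T‖
      = ‖∫ t in (0:ℝ)..T,
          Complex.exp (-(Φ t)) * (-2 * ((V t : ℂ) - W t) / ((F t - V t) * (G t - W t)))‖ *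
          Real.exp ((Φ T).re) := by
        rw [heq, norm_mul, Complex.norm_exp]
    _ ≤ (∫ t in (0:ℝ)..T,
          ‖Complex.exp (-(Φ t)) * (-2 * ((V t : ℂ) - W t) / ((F t - V t) * (G t - W t)))‖) *
          Real.exp ((Φ T).re) := by
        exact mul_le_mul_of_nonneg_right (intervalIntegral.norm_integral_le_integral_norm hT) (Real.exp_nonneg _)
    _ = ∫ t in (0:ℝ)..T, Real.exp ((Φ T).re) *
          ‖Complex.exp (-(Φ t)) * (-2 * ((V t : ℂ) - W t) / ((F t - V t) * (G t - W t)))‖ := by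
        rw [mul_comm]
        exact (intervalIntegral.integral_const_mul _ _).symm
    _ ≤ ∫ t in (0:ℝ)..T, Real.exp S *
          ‖(2:ℂ) * ((V t : ℂ) - W t) / ((F t - V t) * (G t - W t))‖ := by
        apply integral_mono_on hT
        · apply ContinuousOn.intervalIntegrable
          rw [uIcc_of_le hT]
          exact (continuousOn_const.mul ((hΦcont.neg.cexp.continuousOn).mul hprcont).norm)
        · apply ContinuousOn.intervalIntegrable
          rw [uIcc_of_le hT]
          apply continuousOn_const.mul
          apply ContinuousOn.norm
          have : (fun t => (2:ℂ) * ((V t : ℂ) - W t) / ((F t - V t) * (G t - W t)))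
              = fun t => -((-2 : ℂ) * ((V t : ℂ) - W t) / ((F t - V t) * (G t - W t))) := by
            funext t; ring
          rw [this]
          exact hprcont.neg
        · intro t ht
          have hnorm : ‖Complex.exp (-(Φ t)) *
              (-2 * ((V t : ℂ) - W t) / ((F t - V t) * (G t - W t)))‖ =
              Real.exp (-(Φ t).re) *
                ‖(2:ℂ) * ((V t : ℂ) - W t) / ((F t - V t) * (G t - W t))‖ := by
            rw [norm_mul, Complex.norm_exp, Complex.neg_re]
            congr 1
            rw [show (-2 * ((V t : ℂ) - W t) / ((F t - V t) * (G t - W t)))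
              = -((2:ℂ) * ((V t : ℂ) - W t) / ((F t - V t) * (G t - W t))) by ring, norm_neg]
          rw [hnorm, ← mul_assoc, ← Real.exp_add]
          apply mul_le_mul_of_nonneg_right _ (norm_nonneg _)
          apply Real.exp_le_exp.mpr
          have hsub : (Φ T - Φ t) = ∫ s in t..T, φ s := primit_sub hT hφc ht
          have hre : ((Φ T) - (Φ t)).re = ∫ s in t..T, (φ s).re := by
            rw [hsub]
            have hint : IntervalIntegrable φ volume t T := by
              apply ContinuousOn.intervalIntegrable
              apply hφc.mono
              rw [uIcc_of_le ht.2]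
              exact Icc_subset_Icc ht.1 le_rfl
            have := Complex.reCLM.intervalIntegral_comp_comm hint
            simpa using this.symm
          have := hS t ht
          rw [← hre] at this
          simp only [Complex.sub_re] at this
          linarith
    _ = Real.exp S *
          ∫ t in (0:ℝ)..T, ‖(2:ℂ) * ((V t : ℂ) - W t) / ((F t - V t) * (G t - W t))‖ := by
        rw [← intervalIntegral.integral_const_mul]

end pair


lemma sqrt_mul_le_half {p q : ℝ} (hp : 0 ≤ p) (hq : 0 ≤ q) :
    Real.sqrt (p * q) ≤ (p + q) / 2 := by
  rw [show (p + q) / 2 = Real.sqrt (((p + q) / 2) ^ 2) from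
    (Real.sqrt_sq (by positivity)).symm]
  apply Real.sqrt_le_sqrt
  nlinarith [sq_nonneg (p - q)]

lemma integral_sqrt_mul_le {a b : ℝ} (hab : a ≤ b) (c1 c2 : ℝ → ℝ)
    (h1 : ContinuousOn c1 (Icc a b)) (h2 : ContinuousOn c2 (Icc a b))
    (hn1 : ∀ x ∈ Icc a b, 0 ≤ c1 x) (hn2 : ∀ x ∈ Icc a b, 0 ≤ c2 x) :
    ∫ x in a..b, Real.sqrt (c1 x * c2 x) ≤
      Real.sqrt ((∫ x in a..b, c1 x) * (∫ x in a..b, c2 x)) := by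
  set X := ∫ x in a..b, c1 x with hX
  set Y := ∫ x in a..b, c2 x with hY
  have hXn : 0 ≤ X := intervalIntegral.integral_nonneg hab hn1
  have hYn : 0 ≤ Y := intervalIntegral.integral_nonneg hab hn2
  have hint1 : IntervalIntegrable c1 volume a b := by
    apply ContinuousOn.intervalIntegrable; rwa [uIcc_of_le hab]
  have hint2 : IntervalIntegrable c2 volume a b := by
    apply ContinuousOn.intervalIntegrable; rwa [uIcc_of_le hab]
  have hintS : IntervalIntegrable (fun x => Real.sqrt (c1 x * c2 x)) volume a b := by
    apply ContinuousOn.intervalIntegrable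
    rw [uIcc_of_le hab]
    exact Real.continuous_sqrt.comp_continuousOn (h1.mul h2)
  have key : ∀ l : ℝ, 0 < l → (∫ x in a..b, Real.sqrt (c1 x * c2 x)) ≤
      (l * X + Y / l) / 2 := by
    intro l hl
    have hptwise : ∀ x ∈ Icc a b, Real.sqrt (c1 x * c2 x) ≤ (l * c1 x + c2 x / l) / 2 := by
      intro x hx
      have : c1 x * c2 x = (l * c1 x) * (c2 x / l) := by field_simp
      rw [this]
      exact sqrt_mul_le_half (by have := hn1 x hx; positivity)
        (by have := hn2 x hx; positivity)
    have hintR : IntervalIntegrable (fun x => (l * c1 x + c2 x / l) / 2) volume a b :=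
      ((hint1.const_mul l).add (hint2.div_const l)).div_const 2
    calc (∫ x in a..b, Real.sqrt (c1 x * c2 x))
        ≤ ∫ x in a..b, (l * c1 x + c2 x / l) / 2 :=
          integral_mono_on hab hintS hintR hptwise
      _ = (l * X + Y / l) / 2 := by
          rw [intervalIntegral.integral_div, integral_add (hint1.const_mul l) (hint2.div_const l),
            intervalIntegral.integral_const_mul, intervalIntegral.integral_div]
  have htend : Tendsto (fun e : ℝ => Real.sqrt ((X + e) * (Y + e)))
      (nhdsWithin 0 (Ioi 0)) (nhds (Real.sqrt (X * Y))) := by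
    have hc : Continuous (fun e : ℝ => Real.sqrt ((X + e) * (Y + e))) := by
      continuity
    have := (hc.tendsto 0).mono_left (nhdsWithin_le_nhds (s := Ioi (0:ℝ)))
    simpa using this
  refine ge_of_tendsto htend ?_
  filter_upwards [self_mem_nhdsWithin] with e he
  rw [mem_Ioi] at he
  have hXe : (0:ℝ) < X + e := by linarith
  have hYe : (0:ℝ) < Y + e := by linarith
  have hsX : 0 < Real.sqrt (X + e) := Real.sqrt_pos.mpr hXe
  have hsY : 0 < Real.sqrt (Y + e) := Real.sqrt_pos.mpr hYe
  set l := Real.sqrt (Y + e) / Real.sqrt (X + e) with hl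
  have hlpos : 0 < l := by positivity
  have hssX : Real.sqrt (X + e) * Real.sqrt (X + e) = X + e := Real.mul_self_sqrt hXe.le
  have hssY : Real.sqrt (Y + e) * Real.sqrt (Y + e) = Y + e := Real.mul_self_sqrt hYe.le
  have e1 : l * X ≤ Real.sqrt (X + e) * Real.sqrt (Y + e) := by
    rw [hl, div_mul_eq_mul_div, div_le_iff₀ hsX]
    nlinarith [mul_nonneg he.le hsY.le]
  have e2 : Y / l ≤ Real.sqrt (X + e) * Real.sqrt (Y + e) := by
    rw [hl, div_div_eq_mul_div, div_le_iff₀ hsY]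
    nlinarith [mul_nonneg he.le hsX.le]
  calc (∫ x in a..b, Real.sqrt (c1 x * c2 x)) ≤ (l * X + Y / l) / 2 := key l hlpos
    _ ≤ Real.sqrt (X + e) * Real.sqrt (Y + e) := by linarith
    _ = Real.sqrt ((X + e) * (Y + e)) := (Real.sqrt_mul hXe.le _).symm


section onetraj
variable (T : ℝ) (W : ℝ → ℝ) (F : ℝ → ℂ) (hT : 0 ≤ T) (hWc : Continuous W)
  (hF : ∀ t ∈ Icc (0:ℝ) T, HasDerivAt F (-2 / (F t - W t)) t)
  (hpos : ∀ t ∈ Icc (0:ℝ) T, 0 < (F t).im)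

include hT hWc hF hpos

lemma normSq_q_pos : ∀ t ∈ Icc (0:ℝ) T, 0 < Complex.normSq (F t - W t) := by
  intro t ht
  apply Complex.normSq_pos.mpr
  intro h
  have h2 : (F t - (W t : ℂ)).im = (F t).im := by simp
  rw [h] at h2
  exact absurd h2.symm (ne_of_gt (hpos t ht))

lemma normSq_q_contOn : ContinuousOn (fun t => Complex.normSq (F t - W t)) (Icc 0 T) := by
  have hFc : ContinuousOn F (Icc 0 T) := fun t ht => (hF t ht).continuousAt.continuousWithinAt
  exact Complex.continuous_normSq.comp_continuousOn
    (hFc.sub ((Complex.continuous_ofReal.comp hWc).continuousOn))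

lemma loewner_log_im :
    ∫ t in (0:ℝ)..T, 2 / Complex.normSq (F t - W t) =
      Real.log ((F T).im) - Real.log ((F 0).im) := by
  apply integral_eq_sub_of_hasDerivAt
  · intro t ht
    rw [uIcc_of_le hT] at ht
    have hY := hasDerivAt_im' (hF t ht)
    have hlog := hY.log (ne_of_gt (hpos t ht))
    refine hlog.congr_deriv ?_
    rw [im_neg_two_div]
    have h2 : (F t - (W t : ℂ)).im = (F t).im := by simp
    rw [h2]
    have hns := (normSq_q_pos T W F hT hWc hF hpos t ht).ne'
    have hY' := (hpos t ht).ne'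
    field_simp
  · apply ContinuousOn.intervalIntegrable
    rw [uIcc_of_le hT]
    exact continuousOn_const.div (normSq_q_contOn T W F hT hWc hF hpos)
      (fun t ht => ne_of_gt (normSq_q_pos T W F hT hWc hF hpos t ht))

lemma loewner_im_sq_le :
    (F T).im * (F T).im ≤ (F 0).im * (F 0).im + 4 * T := by
  have hanti : AntitoneOn (fun t => (F t).im * (F t).im - 4 * t) (Icc 0 T) := by
    apply antitoneOn_of_deriv_nonpos (convex_Icc 0 T)
    · apply ContinuousOn.sub
      · exact ContinuousOn.mul
          (fun t ht => (hasDerivAt_im' (hF t ht)).continuousAt.continuousWithinAt)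
          (fun t ht => (hasDerivAt_im' (hF t ht)).continuousAt.continuousWithinAt)
      · exact (continuous_const.mul continuous_id).continuousOn
    · intro t ht
      rw [interior_Icc] at ht
      have hY := hasDerivAt_im' (hF t (Ioo_subset_Icc_self ht))
      have h4 : HasDerivAt (fun s : ℝ => 4 * s) 4 t := by
        simpa using (hasDerivAt_id t).const_mul (4:ℝ)
      exact ((hY.mul hY).sub h4).differentiableAt.differentiableWithinAt
    · intro t ht
      rw [interior_Icc] at ht
      have ht' := Ioo_subset_Icc_self ht
      have hY := hasDerivAt_im' (hF t ht')
      have h4 : HasDerivAt (fun s : ℝ => 4 * s) 4 t := by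
        simpa using (hasDerivAt_id t).const_mul (4:ℝ)
      rw [HasDerivAt.deriv (f := fun t => (F t).im * (F t).im - 4 * t) ((hY.mul hY).sub h4)]
      rw [im_neg_two_div]
      have h2 : (F t - (W t : ℂ)).im = (F t).im := by simp
      rw [h2]
      have hns := normSq_q_pos T W F hT hWc hF hpos t ht'
      set Y := (F t).im
      set N := Complex.normSq (F t - W t)
      have hYN : Y * Y ≤ N := by
        have hNval : N = (F t - W t).re * (F t - W t).re + (F t - W t).im * (F t - W t).im :=
          Complex.normSq_apply _
        rw [hNval, h2]
        nlinarith [mul_self_nonneg ((F t - W t).re)]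
      have hfrac : Y * Y / N ≤ 1 := (div_le_one hns).mpr hYN
      have hdiv : 2 * Y / N * Y + Y * (2 * Y / N) ≤ 4 := by
        have heq : 2 * Y / N * Y + Y * (2 * Y / N) = 4 * (Y * Y / N) := by
          field_simp
          ring
        rw [heq]
        linarith
      linarith
  have := hanti (left_mem_Icc.mpr hT) (right_mem_Icc.mpr hT) hT
  simp only at this
  linarith

end onetraj

-- pointwise algebra lemmas
lemma re_two_div_sq_add (q : ℂ) (hq : q ≠ 0) :
    ((2:ℂ) / q ^ 2).re + 2 / Complex.normSq q =
      4 * q.re ^ 2 / (Complex.normSq q) ^ 2 := by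
  have hP : q.re * q.re + q.im * q.im ≠ 0 := by
    intro h
    exact hq (Complex.normSq_eq_zero.mp (by rw [Complex.normSq_apply]; exact h))
  have h1 : ((2:ℂ) / q ^ 2).re = 2 * (q.re ^ 2 - q.im ^ 2) / (Complex.normSq q) ^ 2 := by
    rw [Complex.div_re]
    have hre : (q ^ 2).re = q.re ^ 2 - q.im ^ 2 := by rw [pow_two, Complex.mul_re]; ring
    have hn2 : Complex.normSq (q ^ 2) = (Complex.normSq q) ^ 2 := by
      rw [pow_two, Complex.normSq_mul, pow_two]
    rw [hre, hn2]
    simp [Complex.re_ofNat, Complex.im_ofNat]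
  rw [h1, Complex.normSq_apply]
  field_simp
  ring

lemma m_le_sqrt_c (q1 q2 : ℂ) (h1 : 0 < q1.im) (h2 : 0 < q2.im) :
    ((2:ℂ) / (q1 * q2)).re ≤
      Real.sqrt ((2 * q1.re ^ 2 / (Complex.normSq q1) ^ 2) *
        (2 * q2.re ^ 2 / (Complex.normSq q2) ^ 2)) := by
  have hq1 : q1 ≠ 0 := fun h => by rw [h] at h1; simp at h1
  have hq2 : q2 ≠ 0 := fun h => by rw [h] at h2; simp at h2
  have hn1 : 0 < Complex.normSq q1 := Complex.normSq_pos.mpr hq1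
  have hn2 : 0 < Complex.normSq q2 := Complex.normSq_pos.mpr hq2
  have hrhs : Real.sqrt ((2 * q1.re ^ 2 / (Complex.normSq q1) ^ 2) *
      (2 * q2.re ^ 2 / (Complex.normSq q2) ^ 2)) =
      2 * (|q1.re| * |q2.re|) / (Complex.normSq q1 * Complex.normSq q2) := by
    rw [show (2 * q1.re ^ 2 / (Complex.normSq q1) ^ 2) *
        (2 * q2.re ^ 2 / (Complex.normSq q2) ^ 2) =
        (2 * (|q1.re| * |q2.re|) / (Complex.normSq q1 * Complex.normSq q2)) ^ 2 by
      rw [div_pow, mul_pow, mul_pow, sq_abs, sq_abs, mul_pow]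
      field_simp]
    exact Real.sqrt_sq (by positivity)
  rw [hrhs]
  have hlhs : ((2:ℂ) / (q1 * q2)).re =
      2 * (q1.re * q2.re - q1.im * q2.im) / (Complex.normSq q1 * Complex.normSq q2) := by
    have h0 : ((2:ℂ) / (q1 * q2)).re = 2 * (q1 * q2).re / Complex.normSq (q1 * q2) := by
      rw [Complex.div_re]
      simp [Complex.re_ofNat, Complex.im_ofNat]
    rw [h0, Complex.mul_re, Complex.normSq_mul]
  rw [hlhs]
  rw [div_le_div_iff_of_pos_right (by positivity)]
  nlinarith [le_abs_self (q1.re * q2.re), abs_mul q1.re q2.re, mul_pos h1 h2]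


section derivpart
variable (T : ℝ) (W : ℝ → ℝ) (f : ℝ → ℂ → ℂ)
  (hT : 0 ≤ T) (hW : Continuous W)
  (h0 : ∀ z : ℂ, 0 < z.im → f 0 z = z)
  (hode : ∀ z : ℂ, 0 < z.im → ∀ t ∈ Set.Icc 0 T,
      HasDerivAt (fun s => f s z) (-2 / (f t z - W t)) t)
  (u : ℂ) (hu : 0 < u.im)

include hT hW h0 hode hu

lemma traj_im_ge {z : ℂ} (hz : 0 < z.im) : ∀ t ∈ Icc (0:ℝ) T, z.im ≤ (f t z).im := by
  have h := loewner_im_lower T W (fun s => f s z) (hode z hz)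
    (by simpa [h0 z hz] using hz)
  simpa [h0 z hz] using h

lemma loewner_hasDerivAt :
    HasDerivAt (f T) (Complex.exp (∫ t in (0:ℝ)..T, (2:ℂ) / (f t u - W t) ^ 2)) u := by
  set y0 := u.im with hy0
  -- basic facts about trajectories starting in the half ball
  have hy0pos : 0 < y0 := hu
  have hball : ∀ z : ℂ, ‖z - u‖ < y0 / 2 → y0 / 2 < z.im := by
    intro z hz
    have h1 : |(z - u).im| ≤ ‖z - u‖ := Complex.abs_im_le_norm _
    have h2 : (z - u).im = z.im - y0 := by simp [hy0]
    rw [h2] at h1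
    have := abs_lt.mp (lt_of_le_of_lt h1 hz)
    linarith [this.1]
  -- uniform bounds for trajectories
  have hqlow : ∀ z : ℂ, 0 < z.im → ∀ t ∈ Icc (0:ℝ) T, z.im ≤ ‖f t z - W t‖ := by
    intro z hz t ht
    have h1 : z.im ≤ (f t z).im := traj_im_ge T W f hT hW h0 hode u hu hz t ht
    have h2 : (f t z - W t).im = (f t z).im := by simp
    calc z.im ≤ |(f t z - W t).im| := by rw [h2]; exact h1.trans (le_abs_self _)
      _ ≤ ‖f t z - W t‖ := Complex.abs_im_le_norm _
  -- the pair formula against the trajectory of u, at every endpoint r ∈ [0,T]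
  have hpair : ∀ z : ℂ, 0 < z.im → ∀ r ∈ Icc (0:ℝ) T,
      f r z - f r u = (z - u) *
        Complex.exp (∫ t in (0:ℝ)..r, (2:ℂ) / ((f t z - W t) * (f t u - W t))) := by
    intro z hz r hr
    have hsub : Icc (0:ℝ) r ⊆ Icc (0:ℝ) T := Icc_subset_Icc le_rfl hr.2
    have h := pair_same_driver r W W (fun s => f s z) (fun s => f s u) hr.1 hW hW
      (fun t ht => hode z hz t (hsub ht)) (fun t ht => hode u hu t (hsub ht))
      (fun t ht => lt_of_lt_of_le hz (traj_im_ge T W f hT hW h0 hode u hu hz t (hsub ht)))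
      (fun t ht => lt_of_lt_of_le hu (traj_im_ge T W f hT hW h0 hode u hu hu t (hsub ht)))
      rfl
    simpa [h0 z hz, h0 u hu] using h
  -- continuity of integrands
  have htrajc : ∀ z : ℂ, 0 < z.im → ContinuousOn (fun t => f t z) (Icc 0 T) :=
    fun z hz t ht => (hode z hz t ht).continuousAt.continuousWithinAt
  have hqne : ∀ z : ℂ, 0 < z.im → ∀ t ∈ Icc (0:ℝ) T, f t z - (W t : ℂ) ≠ 0 := by
    intro z hz t ht h
    have h2 : (f t z - (W t : ℂ)).im = (f t z).im := by simp
    rw [h] at h2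
    exact absurd h2.symm
      (ne_of_gt (lt_of_lt_of_le hz (traj_im_ge T W f hT hW h0 hode u hu hz t ht)))
  have hψc : ∀ z : ℂ, 0 < z.im →
      ContinuousOn (fun t => (2:ℂ) / ((f t z - W t) * (f t u - W t))) (Icc 0 T) := by
    intro z hz
    apply ContinuousOn.div continuousOn_const
    · exact (((htrajc z hz)).sub ((Complex.continuous_ofReal.comp hW).continuousOn)).mul
        (((htrajc u hu)).sub ((Complex.continuous_ofReal.comp hW).continuousOn))
    · intro t ht
      exact mul_ne_zero (hqne z hz t ht) (hqne u hu t ht)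
  set C := Real.exp (4 * T / y0 ^ 2) with hC
  have hCpos : 0 < C := Real.exp_pos _
  -- uniform closeness of trajectories
  have hdiff : ∀ z : ℂ, y0 / 2 < z.im → ∀ r ∈ Icc (0:ℝ) T,
      ‖f r z - f r u‖ ≤ ‖z - u‖ * C := by
    intro z hz r hr
    have hzpos : 0 < z.im := lt_trans (by positivity) hz
    rw [hpair z hzpos r hr, norm_mul]
    apply mul_le_mul_of_nonneg_left _ (norm_nonneg _)
    rw [Complex.norm_exp]
    apply Real.exp_le_exp.mpr
    have hb : ‖∫ t in (0:ℝ)..r, (2:ℂ) / ((f t z - W t) * (f t u - W t))‖ ≤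
        (4 / y0 ^ 2) * |r - 0| := by
      apply intervalIntegral.norm_integral_le_of_norm_le_const
      intro x hx
      rw [uIoc_of_le hr.1] at hx
      have hxI : x ∈ Icc (0:ℝ) T := ⟨hx.1.le, hx.2.trans hr.2⟩
      rw [norm_div, norm_mul]
      have h1 : y0 / 2 ≤ ‖f x z - (W x : ℂ)‖ :=
        (hz.le).trans (hqlow z hzpos x hxI)
      have h2 : y0 ≤ ‖f x u - (W x : ℂ)‖ := hqlow u hu x hxI
      have h3 : (0:ℝ) < y0 / 2 := by positivity
      calc ‖(2:ℂ)‖ / (‖f x z - (W x : ℂ)‖ * ‖f x u - (W x : ℂ)‖)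
          = 2 / (‖f x z - (W x : ℂ)‖ * ‖f x u - (W x : ℂ)‖) := by norm_num
        _ ≤ 2 / ((y0 / 2) * y0) := by
            gcongr
        _ = 4 / y0 ^ 2 := by field_simp; ring
    have hre : (∫ t in (0:ℝ)..r, (2:ℂ) / ((f t z - W t) * (f t u - W t))).re ≤
        ‖∫ t in (0:ℝ)..r, (2:ℂ) / ((f t z - W t) * (f t u - W t))‖ :=
      Complex.re_le_norm _
    have : |r - 0| ≤ T := by rw [sub_zero, abs_of_nonneg hr.1]; exact hr.2
    calc (∫ t in (0:ℝ)..r, (2:ℂ) / ((f t z - W t) * (f t u - W t))).re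
        ≤ (4 / y0 ^ 2) * |r - 0| := hre.trans hb
      _ ≤ (4 / y0 ^ 2) * T := by
          apply mul_le_mul_of_nonneg_left this (by positivity)
      _ = 4 * T / y0 ^ 2 := by ring
  -- the integral functional and its continuity estimate
  set Ψ : ℂ → ℂ := fun z => ∫ t in (0:ℝ)..T, (2:ℂ) / ((f t z - W t) * (f t u - W t)) with hΨ
  have hΨbound : ∀ z : ℂ, y0 / 2 < z.im →
      ‖Ψ z - Ψ u‖ ≤ 4 * C / y0 ^ 3 * T * ‖z - u‖ := by
    intro z hz
    have hzpos : 0 < z.im := lt_trans (by positivity) hz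
    have hint1 : IntervalIntegrable (fun t => (2:ℂ) / ((f t z - W t) * (f t u - W t)))
        volume 0 T := by
      apply ContinuousOn.intervalIntegrable
      rw [uIcc_of_le hT]; exact hψc z hzpos
    have hint2 : IntervalIntegrable (fun t => (2:ℂ) / ((f t u - W t) * (f t u - W t)))
        volume 0 T := by
      apply ContinuousOn.intervalIntegrable
      rw [uIcc_of_le hT]; exact hψc u hu
    have hΨsub : Ψ z - Ψ u = ∫ t in (0:ℝ)..T,
        ((2:ℂ) / ((f t z - W t) * (f t u - W t)) - 2 / ((f t u - W t) * (f t u - W t))) := by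
      rw [hΨ, intervalIntegral.integral_sub hint1 hint2]
    rw [hΨsub]
    have hbd : ∀ x ∈ Set.uIoc (0:ℝ) T,
        ‖(2:ℂ) / ((f x z - W x) * (f x u - W x)) - 2 / ((f x u - W x) * (f x u - W x))‖ ≤
        4 * C / y0 ^ 3 * ‖z - u‖ := by
      intro x hx
      rw [uIoc_of_le hT] at hx
      have hxI : x ∈ Icc (0:ℝ) T := ⟨hx.1.le, hx.2⟩
      have hza := hqne z hzpos x hxI
      have hua := hqne u hu x hxI
      have hiden : (2:ℂ) / ((f x z - W x) * (f x u - W x)) -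
          2 / ((f x u - W x) * (f x u - W x)) =
          2 * ((f x u - f x z)) / ((f x z - W x) * ((f x u - W x) * (f x u - W x))) := by
        field_simp
        ring
      rw [hiden]
      simp only [norm_div, norm_mul]
      have h1 : y0 / 2 ≤ ‖f x z - (W x : ℂ)‖ := (hz.le).trans (hqlow z hzpos x hxI)
      have h2 : y0 ≤ ‖f x u - (W x : ℂ)‖ := hqlow u hu x hxI
      have h3 : ‖f x u - f x z‖ ≤ ‖z - u‖ * C := by
        rw [← norm_neg, neg_sub]
        exact hdiff z hz x hxI
      have hden : y0 / 2 * (y0 * y0) ≤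
          ‖f x z - (W x : ℂ)‖ * (‖f x u - (W x : ℂ)‖ * ‖f x u - (W x : ℂ)‖) := by
        apply mul_le_mul h1 (mul_le_mul h2 h2 hy0pos.le (by positivity)) (by positivity)
        exact norm_nonneg _
      have hdenpos : (0:ℝ) < y0 / 2 * (y0 * y0) := by positivity
      calc ‖(2:ℂ)‖ * ‖f x u - f x z‖ /
            (‖f x z - (W x : ℂ)‖ * (‖f x u - (W x : ℂ)‖ * ‖f x u - (W x : ℂ)‖))
          = 2 * ‖f x u - f x z‖ /
            (‖f x z - (W x : ℂ)‖ * (‖f x u - (W x : ℂ)‖ * ‖f x u - (W x : ℂ)‖)) := by norm_num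
        _ ≤ 2 * (‖z - u‖ * C) / (y0 / 2 * (y0 * y0)) := by
            gcongr
        _ = 4 * C / y0 ^ 3 * ‖z - u‖ := by field_simp; ring
    have hle := intervalIntegral.norm_integral_le_of_norm_le_const hbd
    calc ‖∫ t in (0:ℝ)..T, ((2:ℂ) / ((f t z - W t) * (f t u - W t)) -
            2 / ((f t u - W t) * (f t u - W t)))‖
        ≤ 4 * C / y0 ^ 3 * ‖z - u‖ * |T - 0| := hle
      _ = 4 * C / y0 ^ 3 * T * ‖z - u‖ := by
          rw [sub_zero, abs_of_nonneg hT]; ring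
  -- tendsto of Ψ along punctured neighborhoods
  have hballmem : Metric.ball u (y0 / 2) ∈ nhdsWithin u {u}ᶜ :=
    mem_nhdsWithin_of_mem_nhds (Metric.ball_mem_nhds u (by positivity))
  have hΨtendsto : Tendsto Ψ (nhdsWithin u {u}ᶜ) (nhds (Ψ u)) := by
    rw [tendsto_iff_dist_tendsto_zero]
    have hg : Tendsto (fun z : ℂ => 4 * C / y0 ^ 3 * T * ‖z - u‖)
        (nhdsWithin u {u}ᶜ) (nhds 0) := by
      have hcont : Tendsto (fun z : ℂ => 4 * C / y0 ^ 3 * T * ‖z - u‖)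
          (nhds u) (nhds (4 * C / y0 ^ 3 * T * ‖u - u‖)) := by
        apply Tendsto.const_mul
        exact (continuous_norm.comp (continuous_id.sub continuous_const)).tendsto u
      have hzero : (4 * C / y0 ^ 3 * T * ‖u - u‖) = 0 := by simp
      rw [hzero] at hcont
      exact hcont.mono_left nhdsWithin_le_nhds
    refine squeeze_zero' (Filter.Eventually.of_forall (fun z => dist_nonneg)) ?_ hg
    filter_upwards [hballmem] with z hzb
    have hzn : ‖z - u‖ < y0 / 2 := by rwa [Metric.mem_ball, dist_eq_norm] at hzb
    rw [dist_eq_norm]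
    exact hΨbound z (hball z hzn)
  -- conclude via slopes
  have hTmem : T ∈ Icc (0:ℝ) T := right_mem_Icc.mpr hT
  have hgoal : (fun t => (2:ℂ) / (f t u - W t) ^ 2) =
      fun t => (2:ℂ) / ((f t u - W t) * (f t u - W t)) := by
    funext t; rw [sq]
  rw [hasDerivAt_iff_tendsto_slope, hgoal]
  have hslope : ∀ᶠ z in nhdsWithin u {u}ᶜ, Complex.exp (Ψ z) = slope (f T) u z := by
    filter_upwards [hballmem, self_mem_nhdsWithin] with z hzb hzne
    have hzn : ‖z - u‖ < y0 / 2 := by rwa [Metric.mem_ball, dist_eq_norm] at hzb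
    have hzpos : 0 < z.im := lt_trans (by positivity) (hball z hzn)
    have hne : z - u ≠ 0 := sub_ne_zero.mpr hzne
    rw [slope_def_field, hpair z hzpos T hTmem]
    field_simp
    rfl
  exact Tendsto.congr' hslope
    ((Complex.continuous_exp.continuousAt.tendsto).comp hΨtendsto)

end derivpart


/-- Gronwall-type perturbation estimate for the upward Loewner equation
(Johansson Viklund–Rohde–Wong, Lemma 2.3). If `f_t^{(1)}, f_t^{(2)}` solve the upward
Loewner equation on `[0,T]` with driving terms `W^{(1)}, W^{(2)}` and
`ε = sup_{s∈[0,T]} |W_s^{(1)} − W_s^{(2)}|`, then for `u = x + iy ∈ ℍ`,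
`|f_T^{(1)}(u) − f_T^{(2)}(u)| ≤ ε exp{ ½ [log(I_{T,y}|(f_T^{(1)})′(u)|/y) ·
log(I_{T,y}|(f_T^{(2)})′(u)|/y)]^{1/2} + log log (I_{T,y}/y) }` with
`I_{T,y} = √(4T + y²)`. -/
theorem upward_loewner_perturbation (T : ℝ) (hT : 0 < T)
    (W₁ W₂ : ℝ → ℝ) (hW₁ : Continuous W₁) (hW₂ : Continuous W₂)
    (f₁ f₂ : ℝ → ℂ → ℂ)
    (h₁0 : ∀ z : ℂ, 0 < z.im → f₁ 0 z = z)
    (h₂0 : ∀ z : ℂ, 0 < z.im → f₂ 0 z = z)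
    (hode₁ : ∀ z : ℂ, 0 < z.im → ∀ t ∈ Set.Icc 0 T,
      HasDerivAt (fun u => f₁ u z) (-2 / (f₁ t z - W₁ t)) t)
    (hode₂ : ∀ z : ℂ, 0 < z.im → ∀ t ∈ Set.Icc 0 T,
      HasDerivAt (fun u => f₂ u z) (-2 / (f₂ t z - W₂ t)) t)
    (ε : ℝ) (hε : ε = sSup {d : ℝ | ∃ s ∈ Set.Icc 0 T, d = |W₁ s - W₂ s|})
    (u : ℂ) (hu : 0 < u.im) :
    ‖f₁ T u - f₂ T u‖ ≤
      ε * Real.exp ((1 / 2) *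
          Real.sqrt
            (Real.log (Real.sqrt (4 * T + u.im ^ 2) * ‖deriv (f₁ T) u‖ / u.im) *
              Real.log (Real.sqrt (4 * T + u.im ^ 2) * ‖deriv (f₂ T) u‖ / u.im)) +
        Real.log (Real.log (Real.sqrt (4 * T + u.im ^ 2) / u.im))) := by
  have hT0 : (0:ℝ) ≤ T := hT.le
  set I := Real.sqrt (4 * T + u.im ^ 2) with hIdef
  set d1 := ‖deriv (f₁ T) u‖ with hd1def
  set d2 := ‖deriv (f₂ T) u‖ with hd2def
  set L1 := Real.log (I * d1 / u.im) with hL1def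
  set L2 := Real.log (I * d2 / u.im) with hL2def
  set Λ := Real.log (I / u.im) with hΛdef
  -- trajectories
  have hode1 : ∀ t ∈ Icc (0:ℝ) T,
      HasDerivAt (fun s => f₁ s u) (-2 / (f₁ t u - W₁ t)) t := hode₁ u hu
  have hode2 : ∀ t ∈ Icc (0:ℝ) T,
      HasDerivAt (fun s => f₂ s u) (-2 / (f₂ t u - W₂ t)) t := hode₂ u hu
  have him1 : ∀ t ∈ Icc (0:ℝ) T, u.im ≤ (f₁ t u).im :=
    traj_im_ge T W₁ f₁ hT0 hW₁ h₁0 hode₁ u hu hu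
  have him2 : ∀ t ∈ Icc (0:ℝ) T, u.im ≤ (f₂ t u).im :=
    traj_im_ge T W₂ f₂ hT0 hW₂ h₂0 hode₂ u hu hu
  have impos1 : ∀ t ∈ Icc (0:ℝ) T, 0 < (f₁ t u).im := fun t ht => lt_of_lt_of_le hu (him1 t ht)
  have impos2 : ∀ t ∈ Icc (0:ℝ) T, 0 < (f₂ t u).im := fun t ht => lt_of_lt_of_le hu (him2 t ht)
  have hq1ne : ∀ t ∈ Icc (0:ℝ) T, f₁ t u - (W₁ t : ℂ) ≠ 0 := by
    intro t ht h
    have h2 : (f₁ t u - (W₁ t : ℂ)).im = (f₁ t u).im := by simp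
    rw [h] at h2
    exact absurd h2.symm (ne_of_gt (impos1 t ht))
  have hq2ne : ∀ t ∈ Icc (0:ℝ) T, f₂ t u - (W₂ t : ℂ) ≠ 0 := by
    intro t ht h
    have h2 : (f₂ t u - (W₂ t : ℂ)).im = (f₂ t u).im := by simp
    rw [h] at h2
    exact absurd h2.symm (ne_of_gt (impos2 t ht))
  have hN1pos : ∀ t ∈ Icc (0:ℝ) T, 0 < Complex.normSq (f₁ t u - W₁ t) :=
    fun t ht => Complex.normSq_pos.mpr (hq1ne t ht)
  have hN2pos : ∀ t ∈ Icc (0:ℝ) T, 0 < Complex.normSq (f₂ t u - W₂ t) :=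
    fun t ht => Complex.normSq_pos.mpr (hq2ne t ht)
  have hf1c : ContinuousOn (fun t => f₁ t u) (Icc 0 T) :=
    fun t ht => (hode1 t ht).continuousAt.continuousWithinAt
  have hf2c : ContinuousOn (fun t => f₂ t u) (Icc 0 T) :=
    fun t ht => (hode2 t ht).continuousAt.continuousWithinAt
  have hq1c : ContinuousOn (fun t => f₁ t u - (W₁ t : ℂ)) (Icc 0 T) :=
    hf1c.sub ((Complex.continuous_ofReal.comp hW₁).continuousOn)
  have hq2c : ContinuousOn (fun t => f₂ t u - (W₂ t : ℂ)) (Icc 0 T) :=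
    hf2c.sub ((Complex.continuous_ofReal.comp hW₂).continuousOn)
  have hN1c : ContinuousOn (fun t => Complex.normSq (f₁ t u - W₁ t)) (Icc 0 T) :=
    Complex.continuous_normSq.comp_continuousOn hq1c
  have hN2c : ContinuousOn (fun t => Complex.normSq (f₂ t u - W₂ t)) (Icc 0 T) :=
    Complex.continuous_normSq.comp_continuousOn hq2c
  have ha1c : ContinuousOn (fun t => 2 / Complex.normSq (f₁ t u - W₁ t)) (Icc 0 T) :=
    continuousOn_const.div hN1c (fun t ht => (hN1pos t ht).ne')
  have ha2c : ContinuousOn (fun t => 2 / Complex.normSq (f₂ t u - W₂ t)) (Icc 0 T) :=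
    continuousOn_const.div hN2c (fun t ht => (hN2pos t ht).ne')
  -- epsilon facts
  have hδ : ∀ t ∈ Icc (0:ℝ) T, |W₁ t - W₂ t| ≤ ε := by
    intro t ht
    rw [hε]
    apply le_csSup
    · have himg : {d : ℝ | ∃ s ∈ Icc (0:ℝ) T, d = |W₁ s - W₂ s|} =
          (fun s => |W₁ s - W₂ s|) '' (Icc 0 T) := by
        ext d; simp [Set.mem_image, eq_comm]
      rw [himg]
      exact (isCompact_Icc.image (hW₁.sub hW₂).abs).bddAbove
    · exact ⟨t, ht, rfl⟩
  have hε0 : 0 ≤ ε := le_trans (abs_nonneg _) (hδ 0 (left_mem_Icc.mpr hT0))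
  -- I and Λ
  have hIgt : u.im < I := by
    rw [hIdef]
    calc u.im = Real.sqrt (u.im ^ 2) := (Real.sqrt_sq hu.le).symm
      _ < Real.sqrt (4 * T + u.im ^ 2) := Real.sqrt_lt_sqrt (sq_nonneg _) (by linarith)
  have hIpos : 0 < I := lt_trans hu hIgt
  have hΛval : Λ = Real.log I - Real.log u.im := by
    rw [hΛdef, Real.log_div hIpos.ne' hu.ne']
  have hΛpos : 0 < Λ := by
    rw [hΛdef]; exact Real.log_pos ((one_lt_div hu).mpr hIgt)
  -- the A integrals
  set A1 := ∫ t in (0:ℝ)..T, 2 / Complex.normSq (f₁ t u - W₁ t) with hA1def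
  set A2 := ∫ t in (0:ℝ)..T, 2 / Complex.normSq (f₂ t u - W₂ t) with hA2def
  have hA1val : A1 = Real.log ((f₁ T u).im) - Real.log u.im := by
    have h := loewner_log_im T W₁ (fun t => f₁ t u) hT0 hW₁ hode1 impos1
    simp only [h₁0 u hu] at h
    rw [hA1def]
    exact h
  have hA2val : A2 = Real.log ((f₂ T u).im) - Real.log u.im := by
    have h := loewner_log_im T W₂ (fun t => f₂ t u) hT0 hW₂ hode2 impos2
    simp only [h₂0 u hu] at h
    rw [hA2def]
    exact h
  have hA1nonneg : 0 ≤ A1 := intervalIntegral.integral_nonneg hT0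
    (fun t ht => div_nonneg (by norm_num) (Complex.normSq_nonneg _))
  have hA2nonneg : 0 ≤ A2 := intervalIntegral.integral_nonneg hT0
    (fun t ht => div_nonneg (by norm_num) (Complex.normSq_nonneg _))
  have hfTim1 : (f₁ T u).im ≤ I := by
    have hsq := loewner_im_sq_le T W₁ (fun t => f₁ t u) hT0 hW₁ hode1 impos1
    simp only [h₁0 u hu] at hsq
    have himp := impos1 T (right_mem_Icc.mpr hT0)
    calc (f₁ T u).im = Real.sqrt ((f₁ T u).im * (f₁ T u).im) :=
          (Real.sqrt_mul_self himp.le).symm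
      _ ≤ Real.sqrt (4 * T + u.im ^ 2) := Real.sqrt_le_sqrt (by nlinarith)
      _ = I := hIdef.symm
  have hfTim2 : (f₂ T u).im ≤ I := by
    have hsq := loewner_im_sq_le T W₂ (fun t => f₂ t u) hT0 hW₂ hode2 impos2
    simp only [h₂0 u hu] at hsq
    have himp := impos2 T (right_mem_Icc.mpr hT0)
    calc (f₂ T u).im = Real.sqrt ((f₂ T u).im * (f₂ T u).im) :=
          (Real.sqrt_mul_self himp.le).symm
      _ ≤ Real.sqrt (4 * T + u.im ^ 2) := Real.sqrt_le_sqrt (by nlinarith)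
      _ = I := hIdef.symm
  have hA1le : A1 ≤ Λ := by
    rw [hA1val, hΛval]
    have hlog := Real.log_le_log (impos1 T (right_mem_Icc.mpr hT0)) hfTim1
    linarith
  have hA2le : A2 ≤ Λ := by
    rw [hA2val, hΛval]
    have hlog := Real.log_le_log (impos2 T (right_mem_Icc.mpr hT0)) hfTim2
    linarith
  -- derivative identities
  have hg1c : ContinuousOn (fun t => ((2:ℂ) / (f₁ t u - W₁ t) ^ 2).re) (Icc 0 T) :=
    Complex.continuous_re.comp_continuousOn (continuousOn_const.div (hq1c.pow 2)
      (fun t ht => pow_ne_zero 2 (hq1ne t ht)))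
  have hg2c : ContinuousOn (fun t => ((2:ℂ) / (f₂ t u - W₂ t) ^ 2).re) (Icc 0 T) :=
    Complex.continuous_re.comp_continuousOn (continuousOn_const.div (hq2c.pow 2)
      (fun t ht => pow_ne_zero 2 (hq2ne t ht)))
  set G1 := ∫ t in (0:ℝ)..T, ((2:ℂ) / (f₁ t u - W₁ t) ^ 2).re with hG1def
  set G2 := ∫ t in (0:ℝ)..T, ((2:ℂ) / (f₂ t u - W₂ t) ^ 2).re with hG2def
  have hder1 := loewner_hasDerivAt T W₁ f₁ hT0 hW₁ h₁0 hode₁ u hu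
  have hder2 := loewner_hasDerivAt T W₂ f₂ hT0 hW₂ h₂0 hode₂ u hu
  have habs1 : d1 = Real.exp G1 := by
    rw [hd1def, hder1.deriv, Complex.norm_exp, hG1def]
    congr 1
    have hint : IntervalIntegrable (fun t => (2:ℂ) / (f₁ t u - W₁ t) ^ 2) volume 0 T := by
      apply ContinuousOn.intervalIntegrable
      rw [uIcc_of_le hT0]
      exact continuousOn_const.div (hq1c.pow 2) (fun t ht => pow_ne_zero 2 (hq1ne t ht))
    have h := Complex.reCLM.intervalIntegral_comp_comm hint
    simpa using h.symm
  have habs2 : d2 = Real.exp G2 := by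
    rw [hd2def, hder2.deriv, Complex.norm_exp, hG2def]
    congr 1
    have hint : IntervalIntegrable (fun t => (2:ℂ) / (f₂ t u - W₂ t) ^ 2) volume 0 T := by
      apply ContinuousOn.intervalIntegrable
      rw [uIcc_of_le hT0]
      exact continuousOn_const.div (hq2c.pow 2) (fun t ht => pow_ne_zero 2 (hq2ne t ht))
    have h := Complex.reCLM.intervalIntegral_comp_comm hint
    simpa using h.symm
  have hd1pos : 0 < d1 := habs1 ▸ Real.exp_pos _
  have hd2pos : 0 < d2 := habs2 ▸ Real.exp_pos _
  have hL1val : L1 = Λ + G1 := by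
    rw [hL1def, hΛval, Real.log_div (mul_ne_zero hIpos.ne' hd1pos.ne') hu.ne',
      Real.log_mul hIpos.ne' hd1pos.ne', habs1, Real.log_exp]
    ring
  have hL2val : L2 = Λ + G2 := by
    rw [hL2def, hΛval, Real.log_div (mul_ne_zero hIpos.ne' hd2pos.ne') hu.ne',
      Real.log_mul hIpos.ne' hd2pos.ne', habs2, Real.log_exp]
    ring
  -- the c functions
  set c1 : ℝ → ℝ := fun t =>
    2 * (f₁ t u - (W₁ t : ℂ)).re ^ 2 / Complex.normSq (f₁ t u - W₁ t) ^ 2 with hc1def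
  set c2 : ℝ → ℝ := fun t =>
    2 * (f₂ t u - (W₂ t : ℂ)).re ^ 2 / Complex.normSq (f₂ t u - W₂ t) ^ 2 with hc2def
  have hc1cont : ContinuousOn c1 (Icc 0 T) := by
    rw [hc1def]
    exact (continuousOn_const.mul ((Complex.continuous_re.comp_continuousOn hq1c).pow 2)).div
      (hN1c.pow 2) (fun t ht => pow_ne_zero 2 (hN1pos t ht).ne')
  have hc2cont : ContinuousOn c2 (Icc 0 T) := by
    rw [hc2def]
    exact (continuousOn_const.mul ((Complex.continuous_re.comp_continuousOn hq2c).pow 2)).div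
      (hN2c.pow 2) (fun t ht => pow_ne_zero 2 (hN2pos t ht).ne')
  have hc1nonneg : ∀ t ∈ Icc (0:ℝ) T, 0 ≤ c1 t := by
    intro t ht
    rw [hc1def]
    positivity
  have hc2nonneg : ∀ t ∈ Icc (0:ℝ) T, 0 ≤ c2 t := by
    intro t ht
    rw [hc2def]
    positivity
  have hC1 : ∫ t in (0:ℝ)..T, c1 t = (G1 + A1) / 2 := by
    have hcongr : EqOn c1 (fun t =>
        (((2:ℂ) / (f₁ t u - W₁ t) ^ 2).re + 2 / Complex.normSq (f₁ t u - W₁ t)) / 2)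
        (Set.uIcc 0 T) := by
      intro t ht
      rw [uIcc_of_le hT0] at ht
      have hid := re_two_div_sq_add (f₁ t u - W₁ t) (hq1ne t ht)
      simp only [hc1def]
      rw [hid]
      ring
    rw [integral_congr hcongr, intervalIntegral.integral_div,
      integral_add (hg1c.intervalIntegrable_of_Icc hT0)
        (ha1c.intervalIntegrable_of_Icc hT0)]
  have hC2 : ∫ t in (0:ℝ)..T, c2 t = (G2 + A2) / 2 := by
    have hcongr : EqOn c2 (fun t =>
        (((2:ℂ) / (f₂ t u - W₂ t) ^ 2).re + 2 / Complex.normSq (f₂ t u - W₂ t)) / 2)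
        (Set.uIcc 0 T) := by
      intro t ht
      rw [uIcc_of_le hT0] at ht
      have hid := re_two_div_sq_add (f₂ t u - W₂ t) (hq2ne t ht)
      simp only [hc2def]
      rw [hid]
      ring
    rw [integral_congr hcongr, intervalIntegral.integral_div,
      integral_add (hg2c.intervalIntegrable_of_Icc hT0)
        (ha2c.intervalIntegrable_of_Icc hT0)]
  have hC1nonneg : 0 ≤ ∫ t in (0:ℝ)..T, c1 t :=
    intervalIntegral.integral_nonneg hT0 hc1nonneg
  have hC2nonneg : 0 ≤ ∫ t in (0:ℝ)..T, c2 t :=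
    intervalIntegral.integral_nonneg hT0 hc2nonneg
  have hC1le : ∫ t in (0:ℝ)..T, c1 t ≤ L1 / 2 := by rw [hC1, hL1val]; linarith
  have hC2le : ∫ t in (0:ℝ)..T, c2 t ≤ L2 / 2 := by rw [hC2, hL2val]; linarith
  have hL1nonneg : 0 ≤ L1 := by
    have h := hC1nonneg
    rw [hC1] at h
    rw [hL1val]
    linarith
  have hL2nonneg : 0 ≤ L2 := by
    have h := hC2nonneg
    rw [hC2] at h
    rw [hL2val]
    linarith
  -- the uniform exponent bound
  set S := 1 / 2 * Real.sqrt (L1 * L2) with hSdef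
  have hSnonneg : 0 ≤ S := by rw [hSdef]; positivity
  have hSeq : Real.sqrt (L1 / 2 * (L2 / 2)) = S := by
    rw [hSdef, show L1 / 2 * (L2 / 2) = (1/2) ^ 2 * (L1 * L2) by ring,
      Real.sqrt_mul (by positivity), Real.sqrt_sq (by norm_num)]
  have hSbound : ∀ t ∈ Icc (0:ℝ) T,
      (∫ s in t..T, ((2:ℂ) / ((f₁ s u - W₁ s) * (f₂ s u - W₂ s))).re) ≤ S := by
    intro t ht
    have htT : Icc t T ⊆ Icc (0:ℝ) T := Icc_subset_Icc ht.1 le_rfl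
    have hmc : ContinuousOn
        (fun s => ((2:ℂ) / ((f₁ s u - W₁ s) * (f₂ s u - W₂ s))).re) (Icc t T) := by
      apply (Complex.continuous_re.comp_continuousOn _).mono htT
      exact continuousOn_const.div (hq1c.mul hq2c)
        (fun s hs => mul_ne_zero (hq1ne s hs) (hq2ne s hs))
    have hsqc : ContinuousOn (fun s => Real.sqrt (c1 s * c2 s)) (Icc t T) :=
      Real.continuous_sqrt.comp_continuousOn ((hc1cont.mono htT).mul (hc2cont.mono htT))
    have hpt : ∀ s ∈ Icc t T,
        ((2:ℂ) / ((f₁ s u - W₁ s) * (f₂ s u - W₂ s))).re ≤ Real.sqrt (c1 s * c2 s) := by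
      intro s hs
      have hs' := htT hs
      have him1' : 0 < (f₁ s u - (W₁ s : ℂ)).im := by
        have : (f₁ s u - (W₁ s : ℂ)).im = (f₁ s u).im := by simp
        rw [this]; exact impos1 s hs'
      have him2' : 0 < (f₂ s u - (W₂ s : ℂ)).im := by
        have : (f₂ s u - (W₂ s : ℂ)).im = (f₂ s u).im := by simp
        rw [this]; exact impos2 s hs'
      have h := m_le_sqrt_c (f₁ s u - W₁ s) (f₂ s u - W₂ s) him1' him2'
      simp only [hc1def, hc2def]
      exact h
    have htail1 : ∫ s in t..T, c1 s ≤ ∫ s in (0:ℝ)..T, c1 s := by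
      have hi01 : IntervalIntegrable c1 volume 0 t := by
        apply ContinuousOn.intervalIntegrable
        rw [uIcc_of_le ht.1]; exact hc1cont.mono (Icc_subset_Icc le_rfl ht.2)
      have hi1T : IntervalIntegrable c1 volume t T := by
        apply ContinuousOn.intervalIntegrable
        rw [uIcc_of_le ht.2]; exact hc1cont.mono htT
      have hadd := integral_add_adjacent_intervals hi01 hi1T
      have hfst : 0 ≤ ∫ s in (0:ℝ)..t, c1 s :=
        intervalIntegral.integral_nonneg ht.1
          (fun s hs => hc1nonneg s ⟨hs.1, hs.2.trans ht.2⟩)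
      linarith
    have htail2 : ∫ s in t..T, c2 s ≤ ∫ s in (0:ℝ)..T, c2 s := by
      have hi01 : IntervalIntegrable c2 volume 0 t := by
        apply ContinuousOn.intervalIntegrable
        rw [uIcc_of_le ht.1]; exact hc2cont.mono (Icc_subset_Icc le_rfl ht.2)
      have hi1T : IntervalIntegrable c2 volume t T := by
        apply ContinuousOn.intervalIntegrable
        rw [uIcc_of_le ht.2]; exact hc2cont.mono htT
      have hadd := integral_add_adjacent_intervals hi01 hi1T
      have hfst : 0 ≤ ∫ s in (0:ℝ)..t, c2 s :=
        intervalIntegral.integral_nonneg ht.1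
          (fun s hs => hc2nonneg s ⟨hs.1, hs.2.trans ht.2⟩)
      linarith
    have htail1' : 0 ≤ ∫ s in t..T, c1 s :=
      intervalIntegral.integral_nonneg ht.2 (fun s hs => hc1nonneg s (htT hs))
    have htail2' : 0 ≤ ∫ s in t..T, c2 s :=
      intervalIntegral.integral_nonneg ht.2 (fun s hs => hc2nonneg s (htT hs))
    calc (∫ s in t..T, ((2:ℂ) / ((f₁ s u - W₁ s) * (f₂ s u - W₂ s))).re)
        ≤ ∫ s in t..T, Real.sqrt (c1 s * c2 s) :=
          integral_mono_on ht.2 (hmc.intervalIntegrable_of_Icc ht.2)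
            (hsqc.intervalIntegrable_of_Icc ht.2) hpt
      _ ≤ Real.sqrt ((∫ s in t..T, c1 s) * (∫ s in t..T, c2 s)) :=
          integral_sqrt_mul_le ht.2 c1 c2 (hc1cont.mono htT) (hc2cont.mono htT)
            (fun s hs => hc1nonneg s (htT hs)) (fun s hs => hc2nonneg s (htT hs))
      _ ≤ Real.sqrt (L1 / 2 * (L2 / 2)) := by
          apply Real.sqrt_le_sqrt
          apply mul_le_mul (htail1.trans hC1le) (htail2.trans hC2le) htail2' (by linarith)
      _ = S := hSeq
  -- apply the pair bound
  have h00 : (fun t => f₁ t u) 0 = (fun t => f₂ t u) 0 := by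
    simp only [h₁0 u hu, h₂0 u hu]
  have hmain := pair_norm_bound T W₁ W₂ (fun t => f₁ t u) (fun t => f₂ t u)
    hT0 hW₁ hW₂ hode1 hode2 impos1 impos2 h00 S hSbound
  -- bound the driving-difference integral
  have hβpt : ∀ t ∈ Icc (0:ℝ) T,
      ‖(2:ℂ) * ((W₁ t : ℂ) - W₂ t) / ((f₁ t u - W₁ t) * (f₂ t u - W₂ t))‖ ≤
        ε * Real.sqrt ((2 / Complex.normSq (f₁ t u - W₁ t)) *
          (2 / Complex.normSq (f₂ t u - W₂ t))) := by
    intro t ht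
    have ha1 : 0 < ‖f₁ t u - W₁ t‖ := norm_pos_iff.mpr (hq1ne t ht)
    have ha2 : 0 < ‖f₂ t u - W₂ t‖ := norm_pos_iff.mpr (hq2ne t ht)
    have hsqrt : Real.sqrt ((2 / Complex.normSq (f₁ t u - W₁ t)) *
        (2 / Complex.normSq (f₂ t u - W₂ t))) =
        2 / (‖f₁ t u - W₁ t‖ * ‖f₂ t u - W₂ t‖) := by
      rw [show (2 / Complex.normSq (f₁ t u - W₁ t)) * (2 / Complex.normSq (f₂ t u - W₂ t)) =
          (2 / (‖f₁ t u - W₁ t‖ * ‖f₂ t u - W₂ t‖)) ^ 2 by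
        rw [div_pow, mul_pow, Complex.sq_norm, Complex.sq_norm]
        have hn1 := (hN1pos t ht).ne'
        have hn2 := (hN2pos t ht).ne'
        field_simp]
      exact Real.sqrt_sq (by positivity)
    rw [hsqrt]
    have hnorm : ‖(2:ℂ) * ((W₁ t : ℂ) - W₂ t) / ((f₁ t u - W₁ t) * (f₂ t u - W₂ t))‖ =
        2 * |W₁ t - W₂ t| / (‖f₁ t u - W₁ t‖ * ‖f₂ t u - W₂ t‖) := by
      rw [norm_div, norm_mul, norm_mul, Complex.norm_two]
      congr 2
      rw [show ((W₁ t : ℂ) - W₂ t) = ((W₁ t - W₂ t : ℝ) : ℂ) by push_cast; ring,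
        Complex.norm_real, Real.norm_eq_abs]
    rw [hnorm, show ε * (2 / (‖f₁ t u - W₁ t‖ * ‖f₂ t u - W₂ t‖)) =
      2 * ε / (‖f₁ t u - W₁ t‖ * ‖f₂ t u - W₂ t‖) by ring]
    rw [div_le_div_iff_of_pos_right (by positivity)]
    linarith [hδ t ht]
  have hβc : ContinuousOn
      (fun t => ‖(2:ℂ) * ((W₁ t : ℂ) - W₂ t) / ((f₁ t u - W₁ t) * (f₂ t u - W₂ t))‖)
      (Icc 0 T) := by
    apply ContinuousOn.norm
    apply ContinuousOn.div
    · exact continuousOn_const.mul (((Complex.continuous_ofReal.comp hW₁).continuousOn).sub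
        ((Complex.continuous_ofReal.comp hW₂).continuousOn))
    · exact hq1c.mul hq2c
    · exact fun t ht => mul_ne_zero (hq1ne t ht) (hq2ne t ht)
  have hβ : (∫ t in (0:ℝ)..T,
      ‖(2:ℂ) * ((W₁ t : ℂ) - W₂ t) / ((f₁ t u - W₁ t) * (f₂ t u - W₂ t))‖) ≤ ε * Λ := by
    calc (∫ t in (0:ℝ)..T,
        ‖(2:ℂ) * ((W₁ t : ℂ) - W₂ t) / ((f₁ t u - W₁ t) * (f₂ t u - W₂ t))‖)
        ≤ ∫ t in (0:ℝ)..T, ε * Real.sqrt ((2 / Complex.normSq (f₁ t u - W₁ t)) *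
            (2 / Complex.normSq (f₂ t u - W₂ t))) := by
          apply integral_mono_on hT0 (hβc.intervalIntegrable_of_Icc hT0)
            ((continuousOn_const.mul
              (Real.continuous_sqrt.comp_continuousOn
                (ha1c.mul ha2c))).intervalIntegrable_of_Icc hT0) hβpt
      _ = ε * ∫ t in (0:ℝ)..T, Real.sqrt ((2 / Complex.normSq (f₁ t u - W₁ t)) *
            (2 / Complex.normSq (f₂ t u - W₂ t))) := integral_const_mul _ _
      _ ≤ ε * Real.sqrt (A1 * A2) := by
          apply mul_le_mul_of_nonneg_left _ hε0
          exact integral_sqrt_mul_le hT0 _ _ ha1c ha2c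
            (fun t ht => div_nonneg (by norm_num) (Complex.normSq_nonneg _))
            (fun t ht => div_nonneg (by norm_num) (Complex.normSq_nonneg _))
      _ ≤ ε * Λ := by
          apply mul_le_mul_of_nonneg_left _ hε0
          calc Real.sqrt (A1 * A2) ≤ Real.sqrt (Λ * Λ) :=
                Real.sqrt_le_sqrt (mul_le_mul hA1le hA2le hA2nonneg hΛpos.le)
            _ = Λ := Real.sqrt_mul_self hΛpos.le
  -- final chain
  have hlogΛ : Real.exp (Real.log Λ) = Λ := Real.exp_log hΛpos
  calc ‖f₁ T u - f₂ T u‖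
      = ‖(fun t => f₁ t u) T - (fun t => f₂ t u) T‖ := by rfl
    _ ≤ Real.exp S * ∫ t in (0:ℝ)..T,
          ‖(2:ℂ) * ((W₁ t : ℂ) - W₂ t) / ((f₁ t u - W₁ t) * (f₂ t u - W₂ t))‖ := hmain
    _ ≤ Real.exp S * (ε * Λ) :=
        mul_le_mul_of_nonneg_left hβ (Real.exp_pos _).le
    _ = ε * Real.exp (S + Real.log Λ) := by
        rw [Real.exp_add, hlogΛ]; ring
    _ = ε * Real.exp (1 / 2 *
          Real.sqrt (L1 * L2) + Real.log Λ) := by rw [hSdef]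
end

section
/- Let f : ℍ → ℍ be a conformal map with hydrodynamic normalization, i.e. lim_{z→∞}(f(z) − z) = 0, such that f is the inverse of a Loewner map g_t for some time t ∈ [0,1]. Then there is an absolute constant C such that |f′(x + iy)| ≤ C(y^{−1} + 1) for all x + iy ∈ ℍ. -/
open Filter Set Topology

namespace LoewnerDerivAux

lemma neg_two_div_im (u : ℂ) : (-2 / u).im = 2 * u.im / Complex.normSq u := by
  rw [Complex.div_im]; simp; ring

lemma normSq_hasDerivAt {δ : ℝ → ℂ} {d : ℂ} {s : ℝ} (hδ : HasDerivAt δ d s) :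
    HasDerivAt (fun s => Complex.normSq (δ s))
      (2 * ((δ s).re * d.re + (δ s).im * d.im)) s := by
  have hre : HasDerivAt (fun s => (δ s).re) d.re s := by
    exact (Complex.reCLM.hasFDerivAt.comp_hasDerivAt s hδ)
  have him : HasDerivAt (fun s => (δ s).im) d.im s := by
    exact (Complex.imCLM.hasFDerivAt.comp_hasDerivAt s hδ)
  have H := (hre.mul hre).add (him.mul him)
  convert H using 1
  · rfl
  · rfl
  · funext r; exact Complex.normSq_apply _
  ring

section

variable {ξ : ℝ → ℝ} {h : ℝ → ℂ → ℂ} {t : ℝ}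

lemma im_hasDerivAt
    (hODE : ∀ z : ℂ, 0 < z.im → ∀ s ∈ Set.Icc 0 t,
      HasDerivAt (fun u => h u z) (-2 / (h s z - ξ s)) s)
    {z : ℂ} (hz : 0 < z.im) {s : ℝ} (hs : s ∈ Icc 0 t) :
    HasDerivAt (fun s => (h s z).im)
      (2 * (h s z).im / Complex.normSq (h s z - ξ s)) s := by
  have H : HasDerivAt (fun s => (h s z).im) ((-2 / (h s z - ξ s)).im) s := by
    exact (Complex.imCLM.hasFDerivAt.comp_hasDerivAt s (hODE z hz s hs))
  have : (-2 / (h s z - ξ s)).im = 2 * (h s z).im / Complex.normSq (h s z - ξ s) := by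
    rw [neg_two_div_im]; simp
  rwa [this] at H

lemma im_continuousOn
    (hODE : ∀ z : ℂ, 0 < z.im → ∀ s ∈ Set.Icc 0 t,
      HasDerivAt (fun u => h u z) (-2 / (h s z - ξ s)) s)
    {z : ℂ} (hz : 0 < z.im) :
    ContinuousOn (fun s => (h s z).im) (Icc 0 t) := fun s hs =>
  ((im_hasDerivAt hODE hz hs).continuousAt).continuousWithinAt

lemma im_monotoneOn
    (hODE : ∀ z : ℂ, 0 < z.im → ∀ s ∈ Set.Icc 0 t,
      HasDerivAt (fun u => h u z) (-2 / (h s z - ξ s)) s)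
    {z : ℂ} (hz : 0 < z.im) {c : ℝ} (hc : c ∈ Icc 0 t)
    (hpos : ∀ r ∈ Icc 0 c, 0 < (h r z).im) :
    MonotoneOn (fun s => (h s z).im) (Icc 0 c) := by
  have hsub : Icc (0 : ℝ) c ⊆ Icc 0 t := Icc_subset_Icc le_rfl hc.2
  apply monotoneOn_of_deriv_nonneg (convex_Icc 0 c) ((im_continuousOn hODE hz).mono hsub)
  · intro s hs
    rw [interior_Icc] at hs
    exact ((im_hasDerivAt hODE hz (hsub (Ioo_subset_Icc_self hs))).differentiableAt).differentiableWithinAt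
  · intro s hs
    rw [interior_Icc] at hs
    rw [(im_hasDerivAt hODE hz (hsub (Ioo_subset_Icc_self hs))).deriv]
    exact div_nonneg (by linarith [hpos s (Ioo_subset_Icc_self hs)]) (Complex.normSq_nonneg _)

lemma im_ge
    (hinit : ∀ z : ℂ, 0 < z.im → h 0 z = z)
    (hODE : ∀ z : ℂ, 0 < z.im → ∀ s ∈ Set.Icc 0 t,
      HasDerivAt (fun u => h u z) (-2 / (h s z - ξ s)) s)
    {z : ℂ} (hz : 0 < z.im) : ∀ s ∈ Icc 0 t, z.im ≤ (h s z).im := by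
  have hm0 : (h 0 z).im = z.im := by rw [hinit z hz]
  by_contra hcon
  push_neg at hcon
  obtain ⟨s₀, hs₀, hlt⟩ := hcon
  by_cases hcase : ∀ r ∈ Icc 0 s₀, z.im / 2 < (h r z).im
  · have hmono := im_monotoneOn hODE hz hs₀
      (fun r hr => lt_trans (by linarith) (hcase r hr))
    have := hmono (left_mem_Icc.2 hs₀.1) (right_mem_Icc.2 hs₀.1) hs₀.1
    simp only [hm0] at this
    linarith
  · push_neg at hcase
    obtain ⟨r₀, hr₀, hr₀le⟩ := hcase
    set S : Set ℝ := Icc 0 s₀ ∩ (fun s => (h s z).im) ⁻¹' (Iic (z.im / 2)) with hS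
    have hSne : S.Nonempty := ⟨r₀, hr₀, hr₀le⟩
    have hsub : Icc 0 s₀ ⊆ Icc 0 t := Icc_subset_Icc le_rfl hs₀.2
    have hScl : IsClosed S :=
      (((im_continuousOn hODE hz).mono hsub)).preimage_isClosed_of_isClosed
        isClosed_Icc isClosed_Iic
    have hScomp : IsCompact S :=
      isCompact_Icc.of_isClosed_subset hScl inter_subset_left
    set s₁ := sInf S with hs₁def
    have hs₁S : s₁ ∈ S := hScomp.sInf_mem hSne
    obtain ⟨hs₁mem, hs₁le⟩ := hs₁S
    simp only [Set.mem_preimage, Set.mem_Iic] at hs₁le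
    have hs₁t : s₁ ∈ Icc 0 t := hsub hs₁mem
    have hs₁pos : 0 < s₁ := by
      rcases eq_or_lt_of_le hs₁mem.1 with heq | hlt'
      · exfalso
        rw [← heq] at hs₁le
        rw [hm0] at hs₁le
        linarith
      · exact hlt'
    -- points strictly before s₁ have im > z.im/2
    have hlow : ∀ r ∈ Ico 0 s₁, z.im / 2 < (h r z).im := by
      intro r hr
      by_contra hc
      push_neg at hc
      have hrS : r ∈ S := ⟨⟨hr.1, le_trans hr.2.le hs₁mem.2⟩, hc⟩
      have hle' := csInf_le hScomp.bddBelow hrS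
      rw [← hs₁def] at hle'
      exact absurd hr.2 (not_lt.2 hle')
    -- im at s₁ is ≥ z.im/2 by left continuity
    have hs₁ge : z.im / 2 ≤ (h s₁ z).im := by
      have hcont : ContinuousAt (fun s => (h s z).im) s₁ :=
        (im_hasDerivAt hODE hz hs₁t).continuousAt
      have htend : Tendsto (fun s => (h s z).im) (𝓝[<] s₁) (𝓝 ((h s₁ z).im)) :=
        hcont.continuousWithinAt.tendsto
      refine ge_of_tendsto htend ?_
      filter_upwards [Ioo_mem_nhdsLT_of_mem (⟨hs₁pos, le_rfl⟩ : s₁ ∈ Ioc 0 s₁)] with r hr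
      exact (hlow r ⟨hr.1.le, hr.2⟩).le
    have hpos : ∀ r ∈ Icc 0 s₁, 0 < (h r z).im := by
      intro r hr
      rcases lt_or_eq_of_le hr.2 with hlt' | heq
      · exact lt_trans (by linarith) (hlow r ⟨hr.1, hlt'⟩)
      · rw [heq]; linarith
    have hmono := im_monotoneOn hODE hz hs₁t hpos
    have hle := hmono (left_mem_Icc.2 hs₁pos.le) (right_mem_Icc.2 hs₁pos.le) hs₁pos.le
    simp only [hm0] at hle
    linarith

lemma im_sq_le
    (ht0 : 0 ≤ t)
    (hinit : ∀ z : ℂ, 0 < z.im → h 0 z = z)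
    (hODE : ∀ z : ℂ, 0 < z.im → ∀ s ∈ Set.Icc 0 t,
      HasDerivAt (fun u => h u z) (-2 / (h s z - ξ s)) s)
    {z : ℂ} (hz : 0 < z.im) : (h t z).im ^ 2 ≤ z.im ^ 2 + 4 * t := by
  set q : ℝ → ℝ := fun s => (h s z).im ^ 2 - 4 * s with hq
  have hqd : ∀ s ∈ Icc 0 t, HasDerivAt q
      (2 * (h s z).im ^ 1 * (2 * (h s z).im / Complex.normSq (h s z - ξ s)) - 4 * 1) s := by
    intro s hs
    exact ((im_hasDerivAt hODE hz hs).pow 2).sub ((hasDerivAt_id s).const_mul 4)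
  have hanti : AntitoneOn q (Icc 0 t) := by
    apply antitoneOn_of_deriv_nonpos (convex_Icc 0 t)
    · exact fun s hs => ((hqd s hs).continuousAt).continuousWithinAt
    · intro s hs
      rw [interior_Icc] at hs
      exact ((hqd s (Ioo_subset_Icc_self hs)).differentiableAt).differentiableWithinAt
    · intro s hs
      rw [interior_Icc] at hs
      have hs' := Ioo_subset_Icc_self hs
      rw [(hqd s hs').deriv]
      have him := lt_of_lt_of_le hz (im_ge hinit hODE hz s hs')
      have hn : (h s z).im ^ 2 ≤ Complex.normSq (h s z - ξ s) := by
        have : ((h s z - ξ s)).im = (h s z).im := by simp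
        calc (h s z).im ^ 2 = (h s z - ξ s).im ^ 2 := by rw [this]
          _ ≤ Complex.normSq (h s z - ξ s) := by
              rw [Complex.normSq_apply]; nlinarith [sq_nonneg (h s z - ξ s).re]
      have hnpos : 0 < Complex.normSq (h s z - ξ s) := lt_of_lt_of_le (by positivity) hn
      have : 2 * (h s z).im ^ 1 * (2 * (h s z).im / Complex.normSq (h s z - ξ s))
          = 4 * ((h s z).im ^ 2 / Complex.normSq (h s z - ξ s)) := by ring
      rw [this]
      have : (h s z).im ^ 2 / Complex.normSq (h s z - ξ s) ≤ 1 :=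
        (div_le_one hnpos).2 hn
      linarith
  have := hanti (left_mem_Icc.2 ht0) (right_mem_Icc.2 ht0) ht0
  have h0 : q 0 = z.im ^ 2 := by simp [hq, hinit z hz]
  have ht' : q t = (h t z).im ^ 2 - 4 * t := rfl
  rw [h0, ht'] at this
  linarith

lemma key_ineq (u v : ℂ) (hu : 0 < u.im) (hv : 0 < v.im) :
    2 * ((u - v).re * (-2 / u - -2 / v).re + (u - v).im * (-2 / u - -2 / v).im) * (u.im * v.im)
      ≤ Complex.normSq (u - v) *
        (2 * u.im / Complex.normSq u * v.im + u.im * (2 * v.im / Complex.normSq v)) := by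
  have hu0 : u ≠ 0 := fun h => by simp [h] at hu
  have hv0 : v ≠ 0 := fun h => by simp [h] at hv
  have hnu : 0 < Complex.normSq u := Complex.normSq_pos.2 hu0
  have hnv : 0 < Complex.normSq v := Complex.normSq_pos.2 hv0
  have hd : -2 / u - -2 / v = 2 * (u - v) * (u * v)⁻¹ := by
    field_simp
    ring
  -- rewrite the bilinear form as a real part
  have hform : (u - v).re * (-2 / u - -2 / v).re + (u - v).im * (-2 / u - -2 / v).im
      = ((starRingEnd ℂ) (u - v) * (-2 / u - -2 / v)).re := by
    simp only [Complex.mul_re, Complex.conj_re, Complex.conj_im, Complex.sub_re, Complex.sub_im]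
    ring
  have hconj : (starRingEnd ℂ) (u - v) * (-2 / u - -2 / v)
      = 2 * (Complex.normSq (u - v) : ℂ) * (u * v)⁻¹ := by
    rw [hd]
    have : (starRingEnd ℂ) (u - v) * (2 * (u - v) * (u * v)⁻¹)
        = 2 * ((starRingEnd ℂ) (u - v) * (u - v)) * (u * v)⁻¹ := by ring
    rw [this, mul_comm ((starRingEnd ℂ) (u - v)) (u - v), Complex.mul_conj]
  have hre : ((starRingEnd ℂ) (u - v) * (-2 / u - -2 / v)).re
      = 2 * Complex.normSq (u - v) * ((u * v)⁻¹).re := by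
    rw [hconj]
    have : (2 : ℂ) * (Complex.normSq (u - v) : ℂ) = ((2 * Complex.normSq (u - v) : ℝ) : ℂ) := by
      push_cast; ring
    rw [this, mul_comm, Complex.mul_re]
    simp [Complex.ofReal_re, Complex.ofReal_im]
    ring
  -- bound the real part
  have habs : ((u * v)⁻¹).re ≤ (‖u‖ * ‖v‖)⁻¹ := by
    calc ((u * v)⁻¹).re ≤ ‖(u * v)⁻¹‖ := Complex.re_le_norm _
      _ = (‖u‖ * ‖v‖)⁻¹ := by rw [norm_inv, norm_mul]
  have hau : 0 < ‖u‖ := norm_pos_iff.mpr hu0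
  have hav : 0 < ‖v‖ := norm_pos_iff.mpr hv0
  have hamgm : 2 * (‖u‖ * ‖v‖)⁻¹
      ≤ 1 / Complex.normSq u + 1 / Complex.normSq v := by
    rw [← Complex.sq_norm u, ← Complex.sq_norm v]
    rw [inv_eq_one_div, mul_one_div, div_add_div _ _ (by positivity) (by positivity),
      div_le_div_iff₀ (by positivity) (by positivity)]
    nlinarith [mul_nonneg (mul_pos hau hav).le (sq_nonneg (‖u‖ - ‖v‖))]
  have hF : 0 ≤ Complex.normSq (u - v) := Complex.normSq_nonneg _
  have hK : ((u * v)⁻¹).re ≤ (1 / Complex.normSq u + 1 / Complex.normSq v) / 2 := by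
    nlinarith
  calc 2 * ((u - v).re * (-2 / u - -2 / v).re + (u - v).im * (-2 / u - -2 / v).im) * (u.im * v.im)
      = 4 * Complex.normSq (u - v) * ((u * v)⁻¹).re * (u.im * v.im) := by
        rw [hform, hre]; ring
    _ ≤ 4 * Complex.normSq (u - v) * ((1 / Complex.normSq u + 1 / Complex.normSq v) / 2) * (u.im * v.im) := by
        have h4F : 0 ≤ 4 * Complex.normSq (u - v) := by linarith
        have himuv : 0 ≤ u.im * v.im := by positivity
        exact mul_le_mul_of_nonneg_right (mul_le_mul_of_nonneg_left hK h4F) himuv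
    _ = Complex.normSq (u - v) *
        (2 * u.im / Complex.normSq u * v.im + u.im * (2 * v.im / Complex.normSq v)) := by
        field_simp
        ring

lemma diff_le
    (ht0 : 0 ≤ t)
    (hinit : ∀ z : ℂ, 0 < z.im → h 0 z = z)
    (hODE : ∀ z : ℂ, 0 < z.im → ∀ s ∈ Set.Icc 0 t,
      HasDerivAt (fun u => h u z) (-2 / (h s z - ξ s)) s)
    {z w : ℂ} (hz : 0 < z.im) (hw : 0 < w.im) :
    Complex.normSq (h t z - h t w) * (z.im * w.im)
      ≤ Complex.normSq (z - w) * ((h t z).im * (h t w).im) := by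
  have himz : ∀ s ∈ Icc 0 t, 0 < (h s z).im := fun s hs =>
    lt_of_lt_of_le hz (im_ge hinit hODE hz s hs)
  have himw : ∀ s ∈ Icc 0 t, 0 < (h s w).im := fun s hs =>
    lt_of_lt_of_le hw (im_ge hinit hODE hw s hs)
  set F : ℝ → ℝ := fun s => Complex.normSq (h s z - h s w) with hF
  set G : ℝ → ℝ := fun s => (h s z).im * (h s w).im with hG
  have hGpos : ∀ s ∈ Icc 0 t, 0 < G s := fun s hs => mul_pos (himz s hs) (himw s hs)
  set F' : ℝ → ℝ := fun s => 2 * ((h s z - h s w).re * (-2 / (h s z - ξ s) - -2 / (h s w - ξ s)).re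
      + (h s z - h s w).im * (-2 / (h s z - ξ s) - -2 / (h s w - ξ s)).im) with hF'
  set G' : ℝ → ℝ := fun s => 2 * (h s z).im / Complex.normSq (h s z - ξ s) * (h s w).im
      + (h s z).im * (2 * (h s w).im / Complex.normSq (h s w - ξ s)) with hG'
  have hFd : ∀ s ∈ Icc 0 t, HasDerivAt F (F' s) s := fun s hs =>
    normSq_hasDerivAt ((hODE z hz s hs).sub (hODE w hw s hs))
  have hGd : ∀ s ∈ Icc 0 t, HasDerivAt G (G' s) s := fun s hs =>
    (im_hasDerivAt hODE hz hs).mul (im_hasDerivAt hODE hw hs)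
  have hQd : ∀ s ∈ Icc 0 t, HasDerivAt (fun s => F s / G s)
      ((F' s * G s - F s * G' s) / G s ^ 2) s := fun s hs =>
    (hFd s hs).div (hGd s hs) (ne_of_gt (hGpos s hs))
  have hanti : AntitoneOn (fun s => F s / G s) (Icc 0 t) := by
    apply antitoneOn_of_deriv_nonpos (convex_Icc 0 t)
    · exact fun s hs => ((hQd s hs).continuousAt).continuousWithinAt
    · intro s hs
      rw [interior_Icc] at hs
      exact ((hQd s (Ioo_subset_Icc_self hs)).differentiableAt).differentiableWithinAt
    · intro s hs
      rw [interior_Icc] at hs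
      have hs' := Ioo_subset_Icc_self hs
      rw [(hQd s hs').deriv]
      apply div_nonpos_of_nonpos_of_nonneg _ (sq_nonneg _)
      rw [sub_nonpos]
      have hkey := key_ineq (h s z - ξ s) (h s w - ξ s)
        (by simpa using himz s hs') (by simpa using himw s hs')
      have e1 : (h s z - (ξ s : ℂ)) - (h s w - (ξ s : ℂ)) = h s z - h s w := by ring
      have e2 : (h s z - (ξ s : ℂ)).im = (h s z).im := by simp
      have e3 : (h s w - (ξ s : ℂ)).im = (h s w).im := by simp
      rw [e1, e2, e3] at hkey
      exact hkey
  have hle : F t / G t ≤ F 0 / G 0 :=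
    hanti (left_mem_Icc.2 ht0) (right_mem_Icc.2 ht0) ht0
  have h0F : F 0 = Complex.normSq (z - w) := by rw [hF]; simp only []; rw [hinit z hz, hinit w hw]
  have h0G : G 0 = z.im * w.im := by rw [hG]; simp only []; rw [hinit z hz, hinit w hw]
  rw [h0F, h0G] at hle
  rw [div_le_div_iff₀ (hGpos t (right_mem_Icc.2 ht0)) (mul_pos hz hw)] at hle
  exact hle

end

end LoewnerDerivAux


open LoewnerDerivAux in
/-- There is an absolute constant `C` such that: whenever `f = h_t` is the inverse of a
Loewner map at time `t ∈ [0,1]` (realized as the time-`t` solution of the upward Loewner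
equation with a continuous driving term) and `f` satisfies the hydrodynamic normalization
`f(z) − z → 0` as `z → ∞`, then `|f′(x+iy)| ≤ C (y⁻¹ + 1)` for all `x + iy ∈ ℍ`. -/
theorem deriv_bound_hydrodynamic_inverse :
    ∃ C : ℝ, 0 < C ∧
      ∀ (ξ : ℝ → ℝ), Continuous ξ →
        ∀ (h : ℝ → ℂ → ℂ) (t : ℝ), 0 ≤ t → t ≤ 1 →
          (∀ z : ℂ, 0 < z.im → h 0 z = z) →
          (∀ z : ℂ, 0 < z.im → ∀ s ∈ Set.Icc 0 t,
            HasDerivAt (fun u => h u z) (-2 / (h s z - ξ s)) s) →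
          Tendsto (fun y : ℝ => h t (Complex.I * (y : ℂ)) - Complex.I * (y : ℂ))
            atTop (𝓝 0) →
          ∀ x y : ℝ, 0 < y →
            ‖deriv (h t) ((x : ℂ) + (y : ℂ) * Complex.I)‖ ≤ C * (y⁻¹ + 1) := by
  refine ⟨4, by norm_num, ?_⟩
  intro ξ hξ h t ht0 ht1 hinit hODE hhydro x y hy
  set z₀ : ℂ := (x : ℂ) + (y : ℂ) * Complex.I with hz₀
  have hz₀im : z₀.im = y := by simp [hz₀]
  have hz₀pos : 0 < z₀.im := by rw [hz₀im]; exact hy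
  by_cases hdiff : DifferentiableAt ℂ (h t) z₀
  · have hd := hdiff.hasDerivAt
    rw [hasDerivAt_iff_tendsto_slope] at hd
    set d := deriv (h t) z₀ with hdd
    -- eventual bound on the squared modulus of the slope
    have hbound : ∀ᶠ w in 𝓝[≠] z₀,
        ‖slope (h t) z₀ w‖ ^ 2 ≤ 3 * (y ^ 2 + 4) / y ^ 2 := by
      have hball : Metric.ball z₀ (y / 2) ∈ 𝓝[≠] z₀ :=
        nhdsWithin_le_nhds (Metric.ball_mem_nhds z₀ (by positivity))
      filter_upwards [hball, self_mem_nhdsWithin] with w hwball hwne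
      have hwne' : w ≠ z₀ := hwne
      have hdist : ‖w - z₀‖ < y / 2 := by
        have := Metric.mem_ball.1 hwball
        rwa [Complex.dist_eq] at this
      have himd : |w.im - y| ≤ ‖w - z₀‖ := by
        have : (w - z₀).im = w.im - y := by simp [hz₀]
        rw [← this]
        exact Complex.abs_im_le_norm _
      have hwim1 : y / 2 ≤ w.im := by
        have := abs_le.1 (le_of_lt (lt_of_le_of_lt himd hdist))
        linarith [this.1]
      have hwim2 : w.im ≤ 3 / 2 * y := by
        have := abs_le.1 (le_of_lt (lt_of_le_of_lt himd hdist))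
        linarith [this.2]
      have hwimpos : 0 < w.im := by linarith
      -- imaginary parts at time t
      have haw : 0 < (h t w).im :=
        lt_of_lt_of_le hwimpos (im_ge hinit hODE hwimpos t (right_mem_Icc.2 ht0))
      have haz : 0 < (h t z₀).im :=
        lt_of_lt_of_le hz₀pos (im_ge hinit hODE hz₀pos t (right_mem_Icc.2 ht0))
      have hsqw : (h t w).im ^ 2 ≤ 9 / 4 * (y ^ 2 + 4) := by
        have := im_sq_le ht0 hinit hODE hwimpos
        nlinarith
      have hsqz : (h t z₀).im ^ 2 ≤ y ^ 2 + 4 := by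
        have := im_sq_le ht0 hinit hODE hz₀pos
        rw [hz₀im] at this
        nlinarith
      -- product bound
      have hprod : (h t w).im * (h t z₀).im ≤ 3 / 2 * (y ^ 2 + 4) := by
        have hsq : ((h t w).im * (h t z₀).im) ^ 2 ≤ (3 / 2 * (y ^ 2 + 4)) ^ 2 := by
          nlinarith [sq_nonneg ((h t w).im), sq_nonneg ((h t z₀).im)]
        exact (pow_le_pow_iff_left₀ (by positivity) (by positivity) two_ne_zero).1 hsq
      -- two-point estimate
      have hdl := diff_le ht0 hinit hODE hwimpos hz₀pos
      rw [hz₀im] at hdl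
      -- slope in terms of normSq
      have hslope : ‖slope (h t) z₀ w‖ ^ 2
          = Complex.normSq (h t w - h t z₀) / Complex.normSq (w - z₀) := by
        rw [slope_def_field, Complex.sq_norm, map_div₀]
      rw [hslope]
      have hDpos : 0 < Complex.normSq (w - z₀) :=
        Complex.normSq_pos.2 (sub_ne_zero.2 hwne')
      rw [div_le_div_iff₀ hDpos (by positivity : (0:ℝ) < y ^ 2)]
      have hNnn : 0 ≤ Complex.normSq (h t w - h t z₀) := Complex.normSq_nonneg _
      nlinarith [hdl, mul_le_mul_of_nonneg_left hprod hDpos.le,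
        mul_le_mul_of_nonneg_left (mul_le_mul_of_nonneg_right hwim1 hy.le) hNnn]
    have habs : Tendsto (fun w => ‖slope (h t) z₀ w‖ ^ 2) (𝓝[≠] z₀)
        (𝓝 (‖d‖ ^ 2)) :=
      ((continuous_norm.pow 2).tendsto d).comp hd
    have hdle : ‖d‖ ^ 2 ≤ 3 * (y ^ 2 + 4) / y ^ 2 := le_of_tendsto habs hbound
    have hB : ‖d‖ ^ 2 ≤ (2 + 4 / y) ^ 2 := by
      refine le_trans hdle ?_
      rw [div_le_iff₀ (by positivity : (0:ℝ) < y ^ 2)]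
      have heq : (2 + 4 / y) ^ 2 * y ^ 2 = (2 * y + 4) ^ 2 := by
        field_simp
      rw [heq]
      nlinarith
    have : ‖d‖ ≤ 2 + 4 / y :=
      (pow_le_pow_iff_left₀ (norm_nonneg d) (by positivity) two_ne_zero).1 hB
    have h4 : 2 + 4 / y ≤ 4 * (y⁻¹ + 1) := by
      rw [div_eq_mul_inv]
      linarith [inv_pos.2 hy]
    linarith
  · rw [deriv_zero_of_not_differentiableAt hdiff, norm_zero]
    positivity
end
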